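/- Let x be a non-uniform lattice of either class, δ ∈ ℝ and λ ∈ ℂ, and define σ*(z), τ*_δ(z) as in the context and λ*_δ := λ − κ_{2δ−1}. Then at every z ∈ ℂ where the occurring denominators are nonzero: (i) σ(z) = σ*(z−1) + τ*_δ(z−1)·∇x_{δ−1}(z); (ii) τ_δ(z) = (σ*(z+1) − σ*(z−1) − τ*_δ(z−1)·∇x_{δ−1}(z))/Δx_{δ−1}(z); (iii) λ = λ*_δ − Δ_{δ−1}[(τ*_δ(z−1)·∇x_{δ−1}(z) − ∇σ*(z))/∇x_δ(z)]. (Proposition 3.2, with δ = ν−μ) -/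
import Mathlib


noncomputable section

open Finset

/-- `x` is a non-uniform lattice of one of the two classes (q-quadratic with
`q = e^w`, or quadratic), together with its associated functions `α = a` and
`γ = g`. -/
def IsNonUniformLattice (w : ℂ) (x : ℂ → ℂ) (a g : ℝ → ℂ) : Prop :=
  (Complex.exp w ≠ 1 ∧
    ∃ c1 c2 c3 : ℂ, c1 * c2 ≠ 0 ∧
      (∀ s : ℂ, x s = c1 * Complex.exp (s * w) + c2 * Complex.exp (-(s * w)) + c3) ∧
      (∀ μ : ℝ, a μ =
        (Complex.exp ((μ : ℂ) / 2 * w) + Complex.exp (-((μ : ℂ) / 2 * w))) / 2) ∧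
      (∀ μ : ℝ, g μ =
        (Complex.exp ((μ : ℂ) / 2 * w) - Complex.exp (-((μ : ℂ) / 2 * w))) /
          (Complex.exp ((1 : ℂ) / 2 * w) - Complex.exp (-((1 : ℂ) / 2 * w))))) ∨
  (∃ c1 c2 c3 : ℂ, c1 ≠ 0 ∧
    (∀ s : ℂ, x s = c1 * s ^ 2 + c2 * s + c3) ∧
    (∀ μ : ℝ, a μ = 1) ∧ (∀ μ : ℝ, g μ = (μ : ℂ)))

/-- `xl x ν s = x_ν(s) = x (s + ν/2)`. -/
def xl (x : ℂ → ℂ) (ν : ℝ) (s : ℂ) : ℂ := x (s + (ν : ℂ) / 2)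

/-- `σ(z) = σ̃(x z) - (1/2)·τ̃(x z)·∇x₁(z)`. -/
def sig (x : ℂ → ℂ) (st tt : Polynomial ℂ) (z : ℂ) : ℂ :=
  st.eval (x z) - (1 / 2) * tt.eval (x z) * (xl x 1 z - xl x 1 (z - 1))

/-- `κ_ν = α(ν-1)·τ̃' + (1/2)·γ(ν-1)·σ̃''`. -/
def kap (a g : ℝ → ℂ) (st tt : Polynomial ℂ) (ν : ℝ) : ℂ :=
  a (ν - 1) * tt.coeff 1 + (1 / 2) * g (ν - 1) * (2 * st.coeff 2)

/-- Backward difference quotient `∇_ν f (z) = ∇f(z)/∇x_ν(z)`. -/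
def nab (x : ℂ → ℂ) (ν : ℝ) (f : ℂ → ℂ) (z : ℂ) : ℂ :=
  (f z - f (z - 1)) / (xl x ν z - xl x ν (z - 1))

/-- Forward difference quotient `Δ_ν f (z) = Δf(z)/Δx_ν(z)`. -/
def del (x : ℂ → ℂ) (ν : ℝ) (f : ℂ → ℂ) (z : ℂ) : ℂ :=
  (f (z + 1) - f z) / (xl x ν (z + 1) - xl x ν z)

/-- Generalized power `[x_α(s) - x_α(z)]^{(m)} = ∏_{k=0}^{m-1} (x_α(s) - x_α(z-k))`. -/
def gp (x : ℂ → ℂ) (m : ℕ) (al : ℝ) (s z : ℂ) : ℂ :=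
  ∏ k ∈ Finset.range m, (xl x al s - xl x al (z - (k : ℂ)))

/-- The defining relation for the family `τ_ν = T ν`:
`τ_ν(z)·∇x_{ν+1}(z) = σ(z+ν) - σ(z) + τ(z+ν)·∇x₁(z+ν)`. -/
def TauFamily (x : ℂ → ℂ) (st tt : Polynomial ℂ) (T : ℝ → ℂ → ℂ) : Prop :=
  ∀ (ν : ℝ) (z : ℂ),
    T ν z * (xl x (ν + 1) z - xl x (ν + 1) (z - 1)) =
      sig x st tt (z + (ν : ℂ)) - sig x st tt z +
        tt.eval (x (z + (ν : ℂ))) * (xl x 1 (z + (ν : ℂ)) - xl x 1 (z + (ν : ℂ) - 1))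

/-- Adjoint data: `σ*(z) = σ(z-1) + τ_δ(z-1)·∇x_{δ-1}(z)`. -/
def sigStar (x : ℂ → ℂ) (st tt : Polynomial ℂ) (T : ℝ → ℂ → ℂ) (δ : ℝ) (z : ℂ) : ℂ :=
  sig x st tt (z - 1) + T δ (z - 1) * (xl x (δ - 1) z - xl x (δ - 1) (z - 1))

/-- Adjoint data: `τ*_δ(z) = (σ(z+1) - σ(z-1) - τ_δ(z-1)·∇x_{δ-1}(z)) / Δx_{δ-1}(z)`. -/
def tauStar (x : ℂ → ℂ) (st tt : Polynomial ℂ) (T : ℝ → ℂ → ℂ) (δ : ℝ) (z : ℂ) : ℂ :=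
  (sig x st tt (z + 1) - sig x st tt (z - 1) -
      T δ (z - 1) * (xl x (δ - 1) z - xl x (δ - 1) (z - 1))) /
    (xl x (δ - 1) (z + 1) - xl x (δ - 1) z)

set_option maxHeartbeats 4000000

/-- Proposition 3.2 (with `δ = ν - μ`). -/
theorem prop3_2
    (w : ℂ) (x : ℂ → ℂ) (a g : ℝ → ℂ)
    (hlat : IsNonUniformLattice w x a g)
    (st tt : Polynomial ℂ) (hst : st.degree ≤ 2) (htt : tt.degree ≤ 1)
    (T : ℝ → ℂ → ℂ) (hT : TauFamily x st tt T) (δ : ℝ) (lam : ℂ) :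
    ∀ z : ℂ,
      xl x (δ - 1) z - xl x (δ - 1) (z - 1) ≠ 0 →
      xl x (δ - 1) (z + 1) - xl x (δ - 1) z ≠ 0 →
      xl x δ z - xl x δ (z - 1) ≠ 0 →
      xl x δ (z + 1) - xl x δ z ≠ 0 →
      (sig x st tt z = sigStar x st tt T δ (z - 1) +
          tauStar x st tt T δ (z - 1) * (xl x (δ - 1) z - xl x (δ - 1) (z - 1))) ∧
      (T δ z = (sigStar x st tt T δ (z + 1) - sigStar x st tt T δ (z - 1) -
          tauStar x st tt T δ (z - 1) * (xl x (δ - 1) z - xl x (δ - 1) (z - 1))) /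
        (xl x (δ - 1) (z + 1) - xl x (δ - 1) z)) ∧
      (lam = (lam - kap a g st tt (2 * δ - 1)) -
        del x (δ - 1)
          (fun u => (tauStar x st tt T δ (u - 1) *
              (xl x (δ - 1) u - xl x (δ - 1) (u - 1)) -
              (sigStar x st tt T δ u - sigStar x st tt T δ (u - 1))) /
            (xl x δ u - xl x δ (u - 1))) z) := by
  intro z h1 h2 h3 h4
  have e2 : z + 1 - 1 = z := by ring
  have part1 : ∀ u : ℂ, xl x (δ - 1) u - xl x (δ - 1) (u - 1) ≠ 0 →
      sig x st tt u = sigStar x st tt T δ (u - 1) +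
        tauStar x st tt T δ (u - 1) * (xl x (δ - 1) u - xl x (δ - 1) (u - 1)) := by
    intro u hu
    have eu : u - 1 + 1 = u := by ring
    simp only [sigStar, tauStar, eu]
    rw [div_mul_cancel₀ _ hu]
    ring
  have hG : ∀ u : ℂ, xl x (δ - 1) u - xl x (δ - 1) (u - 1) ≠ 0 →
      tauStar x st tt T δ (u - 1) * (xl x (δ - 1) u - xl x (δ - 1) (u - 1)) -
        (sigStar x st tt T δ u - sigStar x st tt T δ (u - 1)) =
      sig x st tt u - sig x st tt (u + (δ : ℂ) - 1) -
        tt.eval (x (u + (δ : ℂ) - 1)) *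
          (xl x 1 (u + (δ : ℂ) - 1) - xl x 1 (u + (δ : ℂ) - 1 - 1)) := by
    intro u hu
    have eu : u - 1 + 1 = u := by ring
    have hTF := hT δ (u - 1)
    have hA : xl x (δ + 1) (u - 1) = xl x (δ - 1) u := by
      unfold xl; push_cast; ring_nf
    have hB : xl x (δ + 1) (u - 1 - 1) = xl x (δ - 1) (u - 1) := by
      unfold xl; push_cast; ring_nf
    have hC : u - 1 + (δ : ℂ) = u + (δ : ℂ) - 1 := by ring
    rw [hA, hB, hC] at hTF
    simp only [sigStar, tauStar, eu]
    rw [div_mul_cancel₀ _ hu]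
    linear_combination -hTF
  refine ⟨part1 z h1, ?_, ?_⟩
  · have i2 : sigStar x st tt T δ (z + 1) =
        sig x st tt z + T δ z * (xl x (δ - 1) (z + 1) - xl x (δ - 1) z) := by
      simp only [sigStar, e2]
    rw [eq_div_iff h2, i2]
    linear_combination -(part1 z h1)
  · have hGz := hG z h1
    have hGz1 := hG (z + 1) (by rw [e2]; exact h2)
    rw [e2] at hGz1
    simp only [del, e2]
    rw [hGz1, hGz]
    have key : (sig x st tt (z + 1) - sig x st tt (z + 1 + (δ : ℂ) - 1) -
          tt.eval (x (z + 1 + (δ : ℂ) - 1)) *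
            (xl x 1 (z + 1 + (δ : ℂ) - 1) - xl x 1 (z + 1 + (δ : ℂ) - 1 - 1))) *
          (xl x δ z - xl x δ (z - 1)) -
        (sig x st tt z - sig x st tt (z + (δ : ℂ) - 1) -
          tt.eval (x (z + (δ : ℂ) - 1)) *
            (xl x 1 (z + (δ : ℂ) - 1) - xl x 1 (z + (δ : ℂ) - 1 - 1))) *
          (xl x δ (z + 1) - xl x δ z) =
        -(kap a g st tt (2 * δ - 1)) *
          ((xl x (δ - 1) (z + 1) - xl x (δ - 1) z) *
            ((xl x δ (z + 1) - xl x δ z) * (xl x δ z - xl x δ (z - 1)))) := by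
      have hstv : ∀ y : ℂ, st.eval y = st.coeff 0 + st.coeff 1 * y + st.coeff 2 * y ^ 2 := by
        intro y
        rw [Polynomial.eval_eq_sum_range' (n := 3)
          (lt_of_le_of_lt (Polynomial.natDegree_le_iff_degree_le.mpr hst) (by norm_num))]
        simp [Finset.sum_range_succ]
      have httv : ∀ y : ℂ, tt.eval y = tt.coeff 0 + tt.coeff 1 * y := by
        intro y
        rw [Polynomial.eval_eq_sum_range' (n := 2)
          (lt_of_le_of_lt (Polynomial.natDegree_le_iff_degree_le.mpr htt) (by norm_num))]
        simp [Finset.sum_range_succ]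
      rcases hlat with ⟨hw, c1, c2, c3, hc, hx, ha, hg⟩ | ⟨c1, c2, c3, hc1, hx, ha, hg⟩
      · have hPne' : Complex.exp ((1:ℂ)/2*w) - Complex.exp (-((1:ℂ)/2*w)) ≠ 0 := by
          intro h
          apply hw
          have hPeq := sub_eq_zero.mp h
          have h2' : Complex.exp ((1:ℂ)/2*w) * Complex.exp ((1:ℂ)/2*w)
              = Complex.exp ((1:ℂ)/2*w) * Complex.exp (-((1:ℂ)/2*w)) := by rw [← hPeq]
          rw [← Complex.exp_add, ← Complex.exp_add] at h2'
          rw [show w = (1:ℂ)/2*w + (1:ℂ)/2*w by ring, h2']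
          norm_num
        have hdp : Complex.exp ((2*(δ:ℂ)-1-1)/2*w)
            = Complex.exp ((δ:ℂ)/2*w)^2 * Complex.exp (-((1:ℂ)/2*w))^2 := by
          rw [show (2*(δ:ℂ)-1-1)/2*w = ((2:ℕ):ℂ)*((δ:ℂ)/2*w) + ((2:ℕ):ℂ)*(-((1:ℂ)/2*w)) by
              push_cast; ring,
            Complex.exp_add, Complex.exp_nat_mul, Complex.exp_nat_mul]
        have hdn : Complex.exp (-((2*(δ:ℂ)-1-1)/2*w))
            = Complex.exp ((1:ℂ)/2*w)^2 * Complex.exp (-((δ:ℂ)/2*w))^2 := by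
          rw [show -((2*(δ:ℂ)-1-1)/2*w) = ((2:ℕ):ℂ)*((1:ℂ)/2*w) + ((2:ℕ):ℂ)*(-((δ:ℂ)/2*w)) by
              push_cast; ring,
            Complex.exp_add, Complex.exp_nat_mul, Complex.exp_nat_mul]
        have hkapDq : (Complex.exp ((1:ℂ)/2*w) - Complex.exp (-((1:ℂ)/2*w))) * kap a g st tt (2*δ-1) = ((Complex.exp ((δ:ℂ)/2*w)^2 * Complex.exp (-((1:ℂ)/2*w))^2 +
              Complex.exp ((1:ℂ)/2*w)^2 * Complex.exp (-((δ:ℂ)/2*w))^2)/2 * tt.coeff 1 *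
              (Complex.exp ((1:ℂ)/2*w) - Complex.exp (-((1:ℂ)/2*w))) +
            (Complex.exp ((δ:ℂ)/2*w)^2 * Complex.exp (-((1:ℂ)/2*w))^2 -
              Complex.exp ((1:ℂ)/2*w)^2 * Complex.exp (-((δ:ℂ)/2*w))^2) * st.coeff 2) := by
          simp only [kap, ha, hg]
          push_cast
          rw [hdp, hdn]
          linear_combination st.coeff 2 *
            (div_mul_cancel₀ (Complex.exp ((δ:ℂ)/2*w)^2 * Complex.exp (-((1:ℂ)/2*w))^2 -
              Complex.exp ((1:ℂ)/2*w)^2 * Complex.exp (-((δ:ℂ)/2*w))^2) hPne')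
        refine mul_left_cancel₀ hPne' ?_
        rw [show (Complex.exp ((1:ℂ)/2*w) - Complex.exp (-((1:ℂ)/2*w))) * (-(kap a g st tt (2 * δ - 1)) *
            ((xl x (δ - 1) (z + 1) - xl x (δ - 1) z) * ((xl x δ (z + 1) - xl x δ z) * (xl x δ z - xl x δ (z - 1))))) =
            -((Complex.exp ((1:ℂ)/2*w) - Complex.exp (-((1:ℂ)/2*w))) * kap a g st tt (2*δ-1)) * ((xl x (δ - 1) (z + 1) - xl x (δ - 1) z) * ((xl x δ (z + 1) - xl x δ z) * (xl x δ z - xl x δ (z - 1)))) by ring, hkapDq]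
        have hpos : ∀ (m k : ℕ) (t : ℂ), t = z + (m : ℂ) / 2 + (k : ℂ) * ((δ : ℂ) / 2) →
            Complex.exp (t * w) = Complex.exp (z * w) *
              Complex.exp ((1 : ℂ) / 2 * w) ^ m * Complex.exp ((δ : ℂ) / 2 * w) ^ k := by
          intro m k t ht
          rw [ht, show (z + (m : ℂ) / 2 + (k : ℂ) * ((δ : ℂ) / 2)) * w
              = z * w + (m : ℂ) * ((1 : ℂ) / 2 * w) + (k : ℂ) * ((δ : ℂ) / 2 * w) by ring,
            Complex.exp_add, Complex.exp_add, Complex.exp_nat_mul, Complex.exp_nat_mul]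
        have hneg : ∀ (m k : ℕ) (t : ℂ), t = z - (m : ℂ) / 2 + (k : ℂ) * ((δ : ℂ) / 2) →
            Complex.exp (t * w) = Complex.exp (z * w) *
              Complex.exp (-((1 : ℂ) / 2 * w)) ^ m * Complex.exp ((δ : ℂ) / 2 * w) ^ k := by
          intro m k t ht
          rw [ht, show (z - (m : ℂ) / 2 + (k : ℂ) * ((δ : ℂ) / 2)) * w
              = z * w + (m : ℂ) * (-((1 : ℂ) / 2 * w)) + (k : ℂ) * ((δ : ℂ) / 2 * w) by ring,
            Complex.exp_add, Complex.exp_add, Complex.exp_nat_mul, Complex.exp_nat_mul]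
        have hposn : ∀ (m k : ℕ) (t : ℂ), t = z + (m : ℂ) / 2 + (k : ℂ) * ((δ : ℂ) / 2) →
            Complex.exp (-(t * w)) = Complex.exp (-(z * w)) *
              Complex.exp (-((1 : ℂ) / 2 * w)) ^ m * Complex.exp (-((δ : ℂ) / 2 * w)) ^ k := by
          intro m k t ht
          rw [ht, show -((z + (m : ℂ) / 2 + (k : ℂ) * ((δ : ℂ) / 2)) * w)
              = -(z * w) + (m : ℂ) * (-((1 : ℂ) / 2 * w)) + (k : ℂ) * (-((δ : ℂ) / 2 * w)) by ring,
            Complex.exp_add, Complex.exp_add, Complex.exp_nat_mul, Complex.exp_nat_mul]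
        have hnegn : ∀ (m k : ℕ) (t : ℂ), t = z - (m : ℂ) / 2 + (k : ℂ) * ((δ : ℂ) / 2) →
            Complex.exp (-(t * w)) = Complex.exp (-(z * w)) *
              Complex.exp ((1 : ℂ) / 2 * w) ^ m * Complex.exp (-((δ : ℂ) / 2 * w)) ^ k := by
          intro m k t ht
          rw [ht, show -((z - (m : ℂ) / 2 + (k : ℂ) * ((δ : ℂ) / 2)) * w)
              = -(z * w) + (m : ℂ) * ((1 : ℂ) / 2 * w) + (k : ℂ) * (-((δ : ℂ) / 2 * w)) by ring,
            Complex.exp_add, Complex.exp_add, Complex.exp_nat_mul, Complex.exp_nat_mul]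
        simp only [sig, xl, hstv, httv, hx]
        push_cast
        rw [hpos 3 0 (z + 1 + 1 / 2) (by push_cast; ring),
          hposn 3 0 (z + 1 + 1 / 2) (by push_cast; ring),
          hpos 1 2 (z + 1 + (δ : ℂ) - 1 + 1 / 2) (by push_cast; ring),
          hposn 1 2 (z + 1 + (δ : ℂ) - 1 + 1 / 2) (by push_cast; ring),
          hpos 0 2 (z + 1 + (δ : ℂ) - 1) (by push_cast; ring),
          hposn 0 2 (z + 1 + (δ : ℂ) - 1) (by push_cast; ring),
          hpos 2 1 (z + 1 + (δ : ℂ) / 2) (by push_cast; ring),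
          hposn 2 1 (z + 1 + (δ : ℂ) / 2) (by push_cast; ring),
          hpos 1 0 (z + 1 - 1 + 1 / 2) (by push_cast; ring),
          hposn 1 0 (z + 1 - 1 + 1 / 2) (by push_cast; ring),
          hpos 1 0 (z + 1 / 2) (by push_cast; ring),
          hposn 1 0 (z + 1 / 2) (by push_cast; ring),
          hpos 2 0 (z + 1) (by push_cast; ring),
          hposn 2 0 (z + 1) (by push_cast; ring),
          hpos 0 1 (z + (δ : ℂ) / 2) (by push_cast; ring),
          hposn 0 1 (z + (δ : ℂ) / 2) (by push_cast; ring),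
          hpos 1 1 (z + 1 + ((δ : ℂ) - 1) / 2) (by push_cast; ring),
          hposn 1 1 (z + 1 + ((δ : ℂ) - 1) / 2) (by push_cast; ring),
          hneg 1 2 (z + 1 + (δ : ℂ) - 1 - 1 + 1 / 2) (by push_cast; ring),
          hnegn 1 2 (z + 1 + (δ : ℂ) - 1 - 1 + 1 / 2) (by push_cast; ring),
          hneg 1 2 (z + (δ : ℂ) - 1 + 1 / 2) (by push_cast; ring),
          hnegn 1 2 (z + (δ : ℂ) - 1 + 1 / 2) (by push_cast; ring),
          hneg 3 2 (z + (δ : ℂ) - 1 - 1 + 1 / 2) (by push_cast; ring),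
          hnegn 3 2 (z + (δ : ℂ) - 1 - 1 + 1 / 2) (by push_cast; ring),
          hneg 2 2 (z + (δ : ℂ) - 1) (by push_cast; ring),
          hnegn 2 2 (z + (δ : ℂ) - 1) (by push_cast; ring),
          hneg 1 0 (z - 1 + 1 / 2) (by push_cast; ring),
          hnegn 1 0 (z - 1 + 1 / 2) (by push_cast; ring),
          hneg 2 1 (z - 1 + (δ : ℂ) / 2) (by push_cast; ring),
          hnegn 2 1 (z - 1 + (δ : ℂ) / 2) (by push_cast; ring),
          hneg 1 1 (z + ((δ : ℂ) - 1) / 2) (by push_cast; ring),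
          hnegn 1 1 (z + ((δ : ℂ) - 1) / 2) (by push_cast; ring)]
        have hUUi : Complex.exp (z * w) * Complex.exp (-(z * w)) = 1 := by
          rw [← Complex.exp_add]; simp
        have hPPi : Complex.exp ((1:ℂ)/2*w) * Complex.exp (-((1:ℂ)/2*w)) = 1 := by
          rw [← Complex.exp_add]; simp
        have hVVi : Complex.exp ((δ:ℂ)/2*w) * Complex.exp (-((δ:ℂ)/2*w)) = 1 := by
          rw [← Complex.exp_add]; simp
        set U := Complex.exp (z * w) with hUdef
        set Ui := Complex.exp (-(z * w)) with hUidef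
        set P := Complex.exp ((1:ℂ)/2*w) with hPdef
        set Pi := Complex.exp (-((1:ℂ)/2*w)) with hPidef
        set V := Complex.exp ((δ:ℂ)/2*w) with hVdef
        set Vi := Complex.exp (-((δ:ℂ)/2*w)) with hVidef
        set c1' := c1 with hc1def
        set c2' := c2 with hc2def
        set c3' := c3 with hc3def
        set s0 := st.coeff 0 with hs0def
        set s1 := st.coeff 1 with hs1def
        set s2 := st.coeff 2 with hs2def
        set t0 := tt.coeff 0 with ht0def
        set t1 := tt.coeff 1 with ht1def
        linear_combination
          ((-1:ℂ)*Pi*Vi*c1'*c2'*s1 + (-2:ℂ)*Pi*Vi*c1'*c2'*c3'*s2 + (-1:ℂ)*Pi*V*c1'*c2'*s1 + (-2:ℂ)*Pi*V*c1'*c2'*c3'*s2 + (1:ℂ)*Pi*V*Vi^2*c1'*c2'*s1 + (2:ℂ)*Pi*V*Vi^2*c1'*c2'*c3'*s2 + (1:ℂ)*Pi*V^2*Vi*c1'*c2'*s1 + (2:ℂ)*Pi*V^2*Vi*c1'*c2'*c3'*s2 + (-1/2:ℂ)*Pi^2*Vi*c1'*c2'*t0 + (-1/2:ℂ)*Pi^2*Vi*c1'*c2'*c3'*t1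 + (1/2:ℂ)*Pi^2*V*Vi^2*c1'*c2'*t0 + (1/2:ℂ)*Pi^2*V*Vi^2*c1'*c2'*c3'*t1 + (1:ℂ)*Pi^3*Vi*c1'*c2'*s1 + (2:ℂ)*Pi^3*Vi*c1'*c2'*c3'*s2 + (-1:ℂ)*Pi^3*V*c1'*c2'*s1 + (-2:ℂ)*Pi^3*V*c1'*c2'*c3'*s2 + (-1:ℂ)*Pi^3*V*Vi^2*c1'*c2'*s1 + (-2:ℂ)*Pi^3*V*Vi^2*c1'*c2'*c3'*s2 + (1:ℂ)*Pi^3*V^2*Vi*c1'*c2'*s1 + (2:ℂ)*Pi^3*V^2*Vi*c1'*c2'*c3'*s2 + (1/2:ℂ)*Pi^4*Vi*c1'*c2'*t0 + (1/2:ℂ)*Pi^4*Vi*c1'*c2'*c3'*t1 + (1:ℂ)*Pi^4*V*c1'*c2'*t0 + (1:ℂ)*Pi^4*V*c1'*c2'*c3'*t1 + (-1/2:ℂ)*Pi^4*V*Vi^2*c1'*c2'*t0 + (-1/2:ℂ)*Pi^4*V*Vi^2*c1'*c2'*c3'*t1 + (-1:ℂ)*Pi^4*V^2*Vi*c1'*c2'*t0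 + (-1:ℂ)*Pi^4*V^2*Vi*c1'*c2'*c3'*t1 + (1:ℂ)*Pi^5*V*c1'*c2'*s1 + (2:ℂ)*Pi^5*V*c1'*c2'*c3'*s2 + (-1:ℂ)*Pi^5*V^2*Vi*c1'*c2'*s1 + (-2:ℂ)*Pi^5*V^2*Vi*c1'*c2'*c3'*s2 + (-1/2:ℂ)*Pi^6*V*c1'*c2'*t0 + (-1/2:ℂ)*Pi^6*V*c1'*c2'*c3'*t1 + (1/2:ℂ)*Pi^6*V^2*Vi*c1'*c2'*t0 + (1/2:ℂ)*Pi^6*V^2*Vi*c1'*c2'*c3'*t1 + (1:ℂ)*P*Vi*c1'*c2'*s1 + (2:ℂ)*P*Vi*c1'*c2'*c3'*s2 + (1:ℂ)*P*V*c1'*c2'*s1 + (2:ℂ)*P*V*c1'*c2'*c3'*s2 + (-1:ℂ)*P*V*Vi^2*c1'*c2'*s1 + (-2:ℂ)*P*V*Vi^2*c1'*c2'*c3'*s2 + (-1:ℂ)*P*V^2*Vi*c1'*c2'*s1 + (-2:ℂ)*P*V^2*Vi*c1'*c2'*c3'*s2 + (1/2:ℂ)*P*Pi*Vi*c1'*c2'*t0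 + (1/2:ℂ)*P*Pi*Vi*c1'*c2'*c3'*t1 + (-1/2:ℂ)*P*Pi*V*c1'*c2'*t0 + (-1/2:ℂ)*P*Pi*V*c1'*c2'*c3'*t1 + (-1/2:ℂ)*P*Pi*V*Vi^2*c1'*c2'*t0 + (-1/2:ℂ)*P*Pi*V*Vi^2*c1'*c2'*c3'*t1 + (1/2:ℂ)*P*Pi*V^2*Vi*c1'*c2'*t0 + (1/2:ℂ)*P*Pi*V^2*Vi*c1'*c2'*c3'*t1 + (-1:ℂ)*P*Pi^2*Vi*c1'*c2'*s1 + (-2:ℂ)*P*Pi^2*Vi*c1'*c2'*c3'*s2 + (1:ℂ)*P*Pi^2*V*c1'*c2'*s1 + (2:ℂ)*P*Pi^2*V*c1'*c2'*c3'*s2 + (1:ℂ)*P*Pi^2*V*Vi^2*c1'*c2'*s1 + (2:ℂ)*P*Pi^2*V*Vi^2*c1'*c2'*c3'*s2 + (-1:ℂ)*P*Pi^2*V^2*Vi*c1'*c2'*s1 + (-2:ℂ)*P*Pi^2*V^2*Vi*c1'*c2'*c3'*s2 + (-1:ℂ)*P*Pi^3*Vi*c1'*c2'*t0 + (-1:ℂ)*P*Pi^3*Vi*c1'*c2'*c3'*t1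 + (-1:ℂ)*P*Pi^3*V*c1'*c2'*t0 + (-1:ℂ)*P*Pi^3*V*c1'*c2'*c3'*t1 + (1:ℂ)*P*Pi^3*V*Vi^2*c1'*c2'*t0 + (1:ℂ)*P*Pi^3*V*Vi^2*c1'*c2'*c3'*t1 + (1:ℂ)*P*Pi^3*V^2*Vi*c1'*c2'*t0 + (1:ℂ)*P*Pi^3*V^2*Vi*c1'*c2'*c3'*t1 + (-1:ℂ)*P*Pi^4*V*c1'*c2'*s1 + (-2:ℂ)*P*Pi^4*V*c1'*c2'*c3'*s2 + (1:ℂ)*P*Pi^4*V^2*Vi*c1'*c2'*s1 + (2:ℂ)*P*Pi^4*V^2*Vi*c1'*c2'*c3'*s2 + (1/2:ℂ)*P*Pi^5*V*c1'*c2'*t0 + (1/2:ℂ)*P*Pi^5*V*c1'*c2'*c3'*t1 + (-1/2:ℂ)*P*Pi^5*V^2*Vi*c1'*c2'*t0 + (-1/2:ℂ)*P*Pi^5*V^2*Vi*c1'*c2'*c3'*t1 + (1/2:ℂ)*P^2*V*c1'*c2'*t0 + (1/2:ℂ)*P^2*V*c1'*c2'*c3'*t1 + (-1/2:ℂ)*P^2*V^2*Vi*c1'*c2'*t0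 + (-1/2:ℂ)*P^2*V^2*Vi*c1'*c2'*c3'*t1 + (-1:ℂ)*P^2*Pi*Vi*c1'*c2'*s1 + (-2:ℂ)*P^2*Pi*Vi*c1'*c2'*c3'*s2 + (1:ℂ)*P^2*Pi*V*c1'*c2'*s1 + (2:ℂ)*P^2*Pi*V*c1'*c2'*c3'*s2 + (1:ℂ)*P^2*Pi*V*Vi^2*c1'*c2'*s1 + (2:ℂ)*P^2*Pi*V*Vi^2*c1'*c2'*c3'*s2 + (-1:ℂ)*P^2*Pi*V^2*Vi*c1'*c2'*s1 + (-2:ℂ)*P^2*Pi*V^2*Vi*c1'*c2'*c3'*s2 + (1/2:ℂ)*P^2*Pi^2*Vi*c1'*c2'*t0 + (1/2:ℂ)*P^2*Pi^2*Vi*c1'*c2'*c3'*t1 + (-1/2:ℂ)*P^2*Pi^2*V*c1'*c2'*t0 + (-1/2:ℂ)*P^2*Pi^2*V*c1'*c2'*c3'*t1 + (-1/2:ℂ)*P^2*Pi^2*V*Vi^2*c1'*c2'*t0 + (-1/2:ℂ)*P^2*Pi^2*V*Vi^2*c1'*c2'*c3'*t1 + (1/2:ℂ)*P^2*Pi^2*V^2*Vi*c1'*c2'*t0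 + (1/2:ℂ)*P^2*Pi^2*V^2*Vi*c1'*c2'*c3'*t1 + (1:ℂ)*P^3*Vi*c1'*c2'*s1 + (2:ℂ)*P^3*Vi*c1'*c2'*c3'*s2 + (-1:ℂ)*P^3*V*c1'*c2'*s1 + (-2:ℂ)*P^3*V*c1'*c2'*c3'*s2 + (-1:ℂ)*P^3*V*Vi^2*c1'*c2'*s1 + (-2:ℂ)*P^3*V*Vi^2*c1'*c2'*c3'*s2 + (1:ℂ)*P^3*V^2*Vi*c1'*c2'*s1 + (2:ℂ)*P^3*V^2*Vi*c1'*c2'*c3'*s2 + (1:ℂ)*P^3*Pi*Vi*c1'*c2'*t0 + (1:ℂ)*P^3*Pi*Vi*c1'*c2'*c3'*t1 + (1:ℂ)*P^3*Pi*V*c1'*c2'*t0 + (1:ℂ)*P^3*Pi*V*c1'*c2'*c3'*t1 + (-1:ℂ)*P^3*Pi*V*Vi^2*c1'*c2'*t0 + (-1:ℂ)*P^3*Pi*V*Vi^2*c1'*c2'*c3'*t1 + (-1:ℂ)*P^3*Pi*V^2*Vi*c1'*c2'*t0 + (-1:ℂ)*P^3*Pi*V^2*Vi*c1'*c2'*c3'*t1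 + (-1:ℂ)*P^4*Vi*c1'*c2'*t0 + (-1:ℂ)*P^4*Vi*c1'*c2'*c3'*t1 + (-1/2:ℂ)*P^4*V*c1'*c2'*t0 + (-1/2:ℂ)*P^4*V*c1'*c2'*c3'*t1 + (1:ℂ)*P^4*V*Vi^2*c1'*c2'*t0 + (1:ℂ)*P^4*V*Vi^2*c1'*c2'*c3'*t1 + (1/2:ℂ)*P^4*V^2*Vi*c1'*c2'*t0 + (1/2:ℂ)*P^4*V^2*Vi*c1'*c2'*c3'*t1 + (1:ℂ)*P^4*Pi*Vi*c1'*c2'*s1 + (2:ℂ)*P^4*Pi*Vi*c1'*c2'*c3'*s2 + (-1:ℂ)*P^4*Pi*V*Vi^2*c1'*c2'*s1 + (-2:ℂ)*P^4*Pi*V*Vi^2*c1'*c2'*c3'*s2 + (-1:ℂ)*P^5*Vi*c1'*c2'*s1 + (-2:ℂ)*P^5*Vi*c1'*c2'*c3'*s2 + (1:ℂ)*P^5*V*Vi^2*c1'*c2'*s1 + (2:ℂ)*P^5*V*Vi^2*c1'*c2'*c3'*s2 + (-1/2:ℂ)*P^5*Pi*Vi*c1'*c2'*t0 + (-1/2:ℂ)*P^5*Pi*Vi*c1'*c2'*c3'*t1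 + (1/2:ℂ)*P^5*Pi*V*Vi^2*c1'*c2'*t0 + (1/2:ℂ)*P^5*Pi*V*Vi^2*c1'*c2'*c3'*t1 + (1/2:ℂ)*P^6*Vi*c1'*c2'*t0 + (1/2:ℂ)*P^6*Vi*c1'*c2'*c3'*t1 + (-1/2:ℂ)*P^6*V*Vi^2*c1'*c2'*t0 + (-1/2:ℂ)*P^6*V*Vi^2*c1'*c2'*c3'*t1 + (-2:ℂ)*Ui*Pi*Vi*c1'*c2'^2*s2 + (-1:ℂ)*Ui*Pi*V*c1'*c2'^2*s2 + (1:ℂ)*Ui*Pi*V*Vi^4*c1'*c2'^2*s2 + (2:ℂ)*Ui*Pi*V^2*Vi^3*c1'*c2'^2*s2 + (1/2:ℂ)*Ui*Pi^2*V*c1'*c2'^2*t1 + (1/2:ℂ)*Ui*Pi^2*V*Vi^4*c1'*c2'^2*t1 + (2:ℂ)*Ui*Pi^3*Vi*c1'*c2'^2*s2 + (-1:ℂ)*Ui*Pi^3*V*Vi^4*c1'*c2'^2*s2 + (-1:ℂ)*Ui*Pi^3*V^3*Vi^2*c1'*c2'^2*s2 + (-1/2:ℂ)*Ui*Pi^4*V*c1'*c2'^2*t1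 + (-1/2:ℂ)*Ui*Pi^4*V*Vi^4*c1'*c2'^2*t1 + (1/2:ℂ)*Ui*Pi^4*V^3*Vi^2*c1'*c2'^2*t1 + (-1:ℂ)*Ui*Pi^5*V*c1'*c2'^2*s2 + (1:ℂ)*Ui*Pi^5*V^3*Vi^2*c1'*c2'^2*s2 + (1:ℂ)*Ui*Pi^6*V*c1'*c2'^2*t1 + (-1/2:ℂ)*Ui*Pi^6*V^3*Vi^2*c1'*c2'^2*t1 + (1:ℂ)*Ui*Pi^7*V*c1'*c2'^2*s2 + (-1:ℂ)*Ui*Pi^7*V^3*Vi^2*c1'*c2'^2*s2 + (-1/2:ℂ)*Ui*Pi^8*V*c1'*c2'^2*t1 + (1/2:ℂ)*Ui*Pi^8*V^3*Vi^2*c1'*c2'^2*t1 + (2:ℂ)*Ui*P*Vi*c1'*c2'^2*s2 + (1:ℂ)*Ui*P*V*c1'*c2'^2*s2 + (-1:ℂ)*Ui*P*V*Vi^4*c1'*c2'^2*s2 + (-2:ℂ)*Ui*P*V^2*Vi^3*c1'*c2'^2*s2 + (-1:ℂ)*Ui*P*Pi*V*c1'*c2'^2*t1 + (-1:ℂ)*Ui*P*Pi*V*Vi^4*c1'*c2'^2*t1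 + (-2:ℂ)*Ui*P*Pi^2*Vi*c1'*c2'^2*s2 + (1:ℂ)*Ui*P*Pi^2*V*Vi^4*c1'*c2'^2*s2 + (1:ℂ)*Ui*P*Pi^2*V^3*Vi^2*c1'*c2'^2*s2 + (-1/2:ℂ)*Ui*P*Pi^3*Vi*c1'*c2'^2*t1 + (1/2:ℂ)*Ui*P*Pi^3*V*c1'*c2'^2*t1 + (1:ℂ)*Ui*P*Pi^3*V*Vi^4*c1'*c2'^2*t1 + (1/2:ℂ)*Ui*P*Pi^3*V^2*Vi^3*c1'*c2'^2*t1 + (-1:ℂ)*Ui*P*Pi^3*V^3*Vi^2*c1'*c2'^2*t1 + (1:ℂ)*Ui*P*Pi^4*V*c1'*c2'^2*s2 + (-1:ℂ)*Ui*P*Pi^4*V^3*Vi^2*c1'*c2'^2*s2 + (-1:ℂ)*Ui*P*Pi^5*V*c1'*c2'^2*t1 + (-1/2:ℂ)*Ui*P*Pi^5*V^2*Vi^3*c1'*c2'^2*t1 + (1:ℂ)*Ui*P*Pi^5*V^3*Vi^2*c1'*c2'^2*t1 + (-1:ℂ)*Ui*P*Pi^6*V*c1'*c2'^2*s2 + (1:ℂ)*Ui*P*Pi^6*V^3*Vi^2*c1'*c2'^2*s2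 + (1/2:ℂ)*Ui*P*Pi^7*V*c1'*c2'^2*t1 + (-1:ℂ)*Ui*P*Pi^7*V^3*Vi^2*c1'*c2'^2*t1 + (1/2:ℂ)*Ui*P^2*V*c1'*c2'^2*t1 + (1/2:ℂ)*Ui*P^2*V*Vi^4*c1'*c2'^2*t1 + (1:ℂ)*Ui*P^2*Pi*V*c1'*c2'^2*s2 + (1:ℂ)*Ui*P^2*Pi*V*Vi^4*c1'*c2'^2*s2 + (-2:ℂ)*Ui*P^2*Pi*V^2*Vi^3*c1'*c2'^2*s2 + (-1/2:ℂ)*Ui*P^2*Pi^2*V*c1'*c2'^2*t1 + (1/2:ℂ)*Ui*P^2*Pi^2*V^3*Vi^2*c1'*c2'^2*t1 + (-2:ℂ)*Ui*P^2*Pi^3*Vi*c1'*c2'^2*s2 + (-1:ℂ)*Ui*P^2*Pi^3*V*Vi^4*c1'*c2'^2*s2 + (2:ℂ)*Ui*P^2*Pi^3*V^2*Vi^3*c1'*c2'^2*s2 + (1:ℂ)*Ui*P^2*Pi^3*V^3*Vi^2*c1'*c2'^2*s2 + (1/2:ℂ)*Ui*P^2*Pi^4*Vi*c1'*c2'^2*t1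 + (-1/2:ℂ)*Ui*P^2*Pi^4*V*Vi^4*c1'*c2'^2*t1 + (-1/2:ℂ)*Ui*P^2*Pi^4*V^2*Vi^3*c1'*c2'^2*t1 + (-1:ℂ)*Ui*P^2*Pi^4*V^3*Vi^2*c1'*c2'^2*t1 + (1:ℂ)*Ui*P^2*Pi^5*V*Vi^4*c1'*c2'^2*s2 + (-2:ℂ)*Ui*P^2*Pi^5*V^2*Vi^3*c1'*c2'^2*s2 + (1:ℂ)*Ui*P^2*Pi^5*V^3*Vi^2*c1'*c2'^2*s2 + (1/2:ℂ)*Ui*P^2*Pi^6*V*Vi^4*c1'*c2'^2*t1 + (1/2:ℂ)*Ui*P^2*Pi^6*V^2*Vi^3*c1'*c2'^2*t1 + (-1:ℂ)*Ui*P^3*V*c1'*c2'^2*s2 + (-1:ℂ)*Ui*P^3*V*Vi^4*c1'*c2'^2*s2 + (2:ℂ)*Ui*P^3*V^2*Vi^3*c1'*c2'^2*s2 + (1/2:ℂ)*Ui*P^3*Pi*Vi*c1'*c2'^2*t1 + (1:ℂ)*Ui*P^3*Pi*V*c1'*c2'^2*t1 + (-1/2:ℂ)*Ui*P^3*Pi*V*Vi^4*c1'*c2'^2*t1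 + (-1/2:ℂ)*Ui*P^3*Pi*V^2*Vi^3*c1'*c2'^2*t1 + (2:ℂ)*Ui*P^3*Pi^2*Vi*c1'*c2'^2*s2 + (1:ℂ)*Ui*P^3*Pi^2*V*Vi^4*c1'*c2'^2*s2 + (-2:ℂ)*Ui*P^3*Pi^2*V^2*Vi^3*c1'*c2'^2*s2 + (-1:ℂ)*Ui*P^3*Pi^2*V^3*Vi^2*c1'*c2'^2*s2 + (1/2:ℂ)*Ui*P^3*Pi^3*Vi*c1'*c2'^2*t1 + (1:ℂ)*Ui*P^3*Pi^3*V*Vi^4*c1'*c2'^2*t1 + (1/2:ℂ)*Ui*P^3*Pi^3*V^2*Vi^3*c1'*c2'^2*t1 + (1:ℂ)*Ui*P^3*Pi^3*V^3*Vi^2*c1'*c2'^2*t1 + (-1:ℂ)*Ui*P^3*Pi^4*V*Vi^4*c1'*c2'^2*s2 + (2:ℂ)*Ui*P^3*Pi^4*V^2*Vi^3*c1'*c2'^2*s2 + (-1:ℂ)*Ui*P^3*Pi^4*V^3*Vi^2*c1'*c2'^2*s2 + (-1:ℂ)*Ui*P^3*Pi^5*V*Vi^4*c1'*c2'^2*t1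 + (1:ℂ)*Ui*P^3*Pi^5*V^3*Vi^2*c1'*c2'^2*t1 + (-1/2:ℂ)*Ui*P^4*V*c1'*c2'^2*t1 + (-1/2:ℂ)*Ui*P^4*Pi^2*Vi*c1'*c2'^2*t1 + (-1:ℂ)*Ui*P^4*Pi^2*V*Vi^4*c1'*c2'^2*t1 + (1/2:ℂ)*Ui*P^4*Pi^2*V^2*Vi^3*c1'*c2'^2*t1 + (-1/2:ℂ)*Ui*P^4*Pi^2*V^3*Vi^2*c1'*c2'^2*t1 + (2:ℂ)*Ui*P^4*Pi^3*Vi*c1'*c2'^2*s2 + (-1:ℂ)*Ui*P^4*Pi^3*V*Vi^4*c1'*c2'^2*s2 + (-1:ℂ)*Ui*P^4*Pi^3*V^3*Vi^2*c1'*c2'^2*s2 + (-1/2:ℂ)*Ui*P^4*Pi^4*Vi*c1'*c2'^2*t1 + (-1/2:ℂ)*Ui*P^4*Pi^4*V^2*Vi^3*c1'*c2'^2*t1 + (-1/2:ℂ)*Ui*P^5*Pi*Vi*c1'*c2'^2*t1 + (-2:ℂ)*Ui*P^5*Pi^2*Vi*c1'*c2'^2*s2 + (1:ℂ)*Ui*P^5*Pi^2*V*Vi^4*c1'*c2'^2*s2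 + (1:ℂ)*Ui*P^5*Pi^2*V^3*Vi^2*c1'*c2'^2*s2 + (1:ℂ)*Ui*P^5*Pi^3*V*Vi^4*c1'*c2'^2*t1 + (-1:ℂ)*Ui*P^5*Pi^3*V^3*Vi^2*c1'*c2'^2*t1 + (1/2:ℂ)*Ui*P^6*V*Vi^4*c1'*c2'^2*t1 + (1/2:ℂ)*Ui*P^6*Pi^2*Vi*c1'*c2'^2*t1 + (1/2:ℂ)*Ui*P^6*Pi^2*V^3*Vi^2*c1'*c2'^2*t1 + (-1/2:ℂ)*Ui*P^7*Pi*V*Vi^4*c1'*c2'^2*t1 + (-1:ℂ)*U*Pi*Vi*c1'^2*c2'*s2 + (-2:ℂ)*U*Pi*V*c1'^2*c2'*s2 + (2:ℂ)*U*Pi*V^3*Vi^2*c1'^2*c2'*s2 + (1:ℂ)*U*Pi*V^4*Vi*c1'^2*c2'*s2 + (-1/2:ℂ)*U*Pi^2*Vi*c1'^2*c2'*t1 + (-1/2:ℂ)*U*Pi^2*V^4*Vi*c1'^2*c2'*t1 + (1:ℂ)*U*Pi^3*Vi*c1'^2*c2'*s2 + (-2:ℂ)*U*Pi^3*V^3*Vi^2*c1'^2*c2'*s2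 + (1:ℂ)*U*Pi^3*V^4*Vi*c1'^2*c2'*s2 + (1/2:ℂ)*U*Pi^4*Vi*c1'^2*c2'*t1 + (-1/2:ℂ)*U*Pi^6*V^4*Vi*c1'^2*c2'*t1 + (1:ℂ)*U*P*Vi*c1'^2*c2'*s2 + (2:ℂ)*U*P*V*c1'^2*c2'*s2 + (-2:ℂ)*U*P*V^3*Vi^2*c1'^2*c2'*s2 + (-1:ℂ)*U*P*V^4*Vi*c1'^2*c2'*s2 + (1:ℂ)*U*P*Pi*Vi*c1'^2*c2'*t1 + (1:ℂ)*U*P*Pi*V^4*Vi*c1'^2*c2'*t1 + (-1:ℂ)*U*P*Pi^2*Vi*c1'^2*c2'*s2 + (2:ℂ)*U*P*Pi^2*V^3*Vi^2*c1'^2*c2'*s2 + (-1:ℂ)*U*P*Pi^2*V^4*Vi*c1'^2*c2'*s2 + (-1:ℂ)*U*P*Pi^3*Vi*c1'^2*c2'*t1 + (-1/2:ℂ)*U*P*Pi^3*V*c1'^2*c2'*t1 + (1/2:ℂ)*U*P*Pi^3*V^3*Vi^2*c1'^2*c2'*t1 + (1/2:ℂ)*U*P*Pi^3*V^4*Vi*c1'^2*c2'*t1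 + (1/2:ℂ)*U*P*Pi^5*V*c1'^2*c2'*t1 + (1/2:ℂ)*U*P*Pi^7*V^4*Vi*c1'^2*c2'*t1 + (-1/2:ℂ)*U*P^2*Vi*c1'^2*c2'*t1 + (-1/2:ℂ)*U*P^2*V^4*Vi*c1'^2*c2'*t1 + (2:ℂ)*U*P^2*Pi*V*c1'^2*c2'*s2 + (-1:ℂ)*U*P^2*Pi*V^2*Vi^3*c1'^2*c2'*s2 + (-1:ℂ)*U*P^2*Pi*V^4*Vi*c1'^2*c2'*s2 + (1/2:ℂ)*U*P^2*Pi^2*Vi*c1'^2*c2'*t1 + (-1/2:ℂ)*U*P^2*Pi^2*V^2*Vi^3*c1'^2*c2'*t1 + (-2:ℂ)*U*P^2*Pi^3*V*c1'^2*c2'*s2 + (1:ℂ)*U*P^2*Pi^3*V^2*Vi^3*c1'^2*c2'*s2 + (2:ℂ)*U*P^2*Pi^3*V^3*Vi^2*c1'^2*c2'*s2 + (-1:ℂ)*U*P^2*Pi^3*V^4*Vi*c1'^2*c2'*s2 + (1/2:ℂ)*U*P^2*Pi^4*V*c1'^2*c2'*t1 + (1/2:ℂ)*U*P^2*Pi^4*V^2*Vi^3*c1'^2*c2'*t1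 + (-1/2:ℂ)*U*P^2*Pi^4*V^3*Vi^2*c1'^2*c2'*t1 + (1:ℂ)*U*P^2*Pi^4*V^4*Vi*c1'^2*c2'*t1 + (2:ℂ)*U*P^2*Pi^5*V*c1'^2*c2'*s2 + (-1:ℂ)*U*P^2*Pi^5*V^2*Vi^3*c1'^2*c2'*s2 + (-1:ℂ)*U*P^2*Pi^5*V^4*Vi*c1'^2*c2'*s2 + (-1/2:ℂ)*U*P^2*Pi^6*V*c1'^2*c2'*t1 + (-1/2:ℂ)*U*P^2*Pi^6*V^2*Vi^3*c1'^2*c2'*t1 + (-2:ℂ)*U*P^3*V*c1'^2*c2'*s2 + (1:ℂ)*U*P^3*V^2*Vi^3*c1'^2*c2'*s2 + (1:ℂ)*U*P^3*V^4*Vi*c1'^2*c2'*s2 + (-1/2:ℂ)*U*P^3*Pi*Vi*c1'^2*c2'*t1 + (1/2:ℂ)*U*P^3*Pi*V*c1'^2*c2'*t1 + (1:ℂ)*U*P^3*Pi*V^2*Vi^3*c1'^2*c2'*t1 + (-1/2:ℂ)*U*P^3*Pi*V^3*Vi^2*c1'^2*c2'*t1 + (-1:ℂ)*U*P^3*Pi*V^4*Vi*c1'^2*c2'*t1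 + (2:ℂ)*U*P^3*Pi^2*V*c1'^2*c2'*s2 + (-1:ℂ)*U*P^3*Pi^2*V^2*Vi^3*c1'^2*c2'*s2 + (-2:ℂ)*U*P^3*Pi^2*V^3*Vi^2*c1'^2*c2'*s2 + (1:ℂ)*U*P^3*Pi^2*V^4*Vi*c1'^2*c2'*s2 + (-1/2:ℂ)*U*P^3*Pi^3*V*c1'^2*c2'*t1 + (-1:ℂ)*U*P^3*Pi^3*V^2*Vi^3*c1'^2*c2'*t1 + (-1/2:ℂ)*U*P^3*Pi^3*V^3*Vi^2*c1'^2*c2'*t1 + (-1:ℂ)*U*P^3*Pi^3*V^4*Vi*c1'^2*c2'*t1 + (-2:ℂ)*U*P^3*Pi^4*V*c1'^2*c2'*s2 + (1:ℂ)*U*P^3*Pi^4*V^2*Vi^3*c1'^2*c2'*s2 + (1:ℂ)*U*P^3*Pi^4*V^4*Vi*c1'^2*c2'*s2 + (1:ℂ)*U*P^3*Pi^5*V^2*Vi^3*c1'^2*c2'*t1 + (-1:ℂ)*U*P^3*Pi^5*V^4*Vi*c1'^2*c2'*t1 + (1/2:ℂ)*U*P^4*Vi*c1'^2*c2'*t1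 + (-1/2:ℂ)*U*P^4*V^2*Vi^3*c1'^2*c2'*t1 + (1/2:ℂ)*U*P^4*V^4*Vi*c1'^2*c2'*t1 + (-1:ℂ)*U*P^4*Pi*Vi*c1'^2*c2'*s2 + (1:ℂ)*U*P^4*Pi*V^2*Vi^3*c1'^2*c2'*s2 + (-1/2:ℂ)*U*P^4*Pi^2*V*c1'^2*c2'*t1 + (1:ℂ)*U*P^4*Pi^2*V^2*Vi^3*c1'^2*c2'*t1 + (1/2:ℂ)*U*P^4*Pi^2*V^3*Vi^2*c1'^2*c2'*t1 + (1/2:ℂ)*U*P^4*Pi^2*V^4*Vi*c1'^2*c2'*t1 + (1:ℂ)*U*P^4*Pi^3*V^2*Vi^3*c1'^2*c2'*s2 + (-2:ℂ)*U*P^4*Pi^3*V^3*Vi^2*c1'^2*c2'*s2 + (1:ℂ)*U*P^4*Pi^3*V^4*Vi*c1'^2*c2'*s2 + (1/2:ℂ)*U*P^4*Pi^4*V*c1'^2*c2'*t1 + (1/2:ℂ)*U*P^4*Pi^4*V^3*Vi^2*c1'^2*c2'*t1 + (1:ℂ)*U*P^5*Vi*c1'^2*c2'*s2 + (-1:ℂ)*U*P^5*V^2*Vi^3*c1'^2*c2'*s2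 + (1:ℂ)*U*P^5*Pi*Vi*c1'^2*c2'*t1 + (-1:ℂ)*U*P^5*Pi*V^2*Vi^3*c1'^2*c2'*t1 + (1/2:ℂ)*U*P^5*Pi*V^3*Vi^2*c1'^2*c2'*t1 + (-1:ℂ)*U*P^5*Pi^2*V^2*Vi^3*c1'^2*c2'*s2 + (2:ℂ)*U*P^5*Pi^2*V^3*Vi^2*c1'^2*c2'*s2 + (-1:ℂ)*U*P^5*Pi^2*V^4*Vi*c1'^2*c2'*s2 + (-1:ℂ)*U*P^5*Pi^3*V^2*Vi^3*c1'^2*c2'*t1 + (1:ℂ)*U*P^5*Pi^3*V^4*Vi*c1'^2*c2'*t1 + (-1:ℂ)*U*P^6*Vi*c1'^2*c2'*t1 + (1/2:ℂ)*U*P^6*V^2*Vi^3*c1'^2*c2'*t1 + (1:ℂ)*U*P^6*Pi*Vi*c1'^2*c2'*s2 + (-1:ℂ)*U*P^6*Pi*V^2*Vi^3*c1'^2*c2'*s2 + (-1/2:ℂ)*U*P^6*Pi^2*V^3*Vi^2*c1'^2*c2'*t1 + (-1/2:ℂ)*U*P^6*Pi^2*V^4*Vi*c1'^2*c2'*t1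 + (-1:ℂ)*U*P^7*Vi*c1'^2*c2'*s2 + (1:ℂ)*U*P^7*V^2*Vi^3*c1'^2*c2'*s2 + (-1/2:ℂ)*U*P^7*Pi*Vi*c1'^2*c2'*t1 + (1:ℂ)*U*P^7*Pi*V^2*Vi^3*c1'^2*c2'*t1 + (1/2:ℂ)*U*P^8*Vi*c1'^2*c2'*t1 + (-1/2:ℂ)*U*P^8*V^2*Vi^3*c1'^2*c2'*t1) * hUUi +
          ((1:ℂ)*Vi*c1'*c2'*t0 + (1:ℂ)*Vi*c1'*c2'*c3'*t1 + (-1:ℂ)*V*c1'*c2'*t0 + (-1:ℂ)*V*c1'*c2'*c3'*t1 + (-1:ℂ)*V*Vi^2*c1'*c2'*t0 + (-1:ℂ)*V*Vi^2*c1'*c2'*c3'*t1 + (1:ℂ)*V^2*Vi*c1'*c2'*t0 + (1:ℂ)*V^2*Vi*c1'*c2'*c3'*t1 + (-1:ℂ)*Pi*Vi*c1'*c2'*s1 + (-2:ℂ)*Pi*Vi*c1'*c2'*c3'*s2 + (1:ℂ)*Pi*V*c1'*c2'*s1 + (2:ℂ)*Pi*V*c1'*c2'*c3'*s2 + (1:ℂ)*Pi*V*Vi^2*c1'*c2'*s1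 + (2:ℂ)*Pi*V*Vi^2*c1'*c2'*c3'*s2 + (-1:ℂ)*Pi*V^2*Vi*c1'*c2'*s1 + (-2:ℂ)*Pi*V^2*Vi*c1'*c2'*c3'*s2 + (-1:ℂ)*Pi^2*Vi*c1'*c2'*t0 + (-1:ℂ)*Pi^2*Vi*c1'*c2'*c3'*t1 + (-1:ℂ)*Pi^2*V*c1'*c2'*t0 + (-1:ℂ)*Pi^2*V*c1'*c2'*c3'*t1 + (1:ℂ)*Pi^2*V*Vi^2*c1'*c2'*t0 + (1:ℂ)*Pi^2*V*Vi^2*c1'*c2'*c3'*t1 + (1:ℂ)*Pi^2*V^2*Vi*c1'*c2'*t0 + (1:ℂ)*Pi^2*V^2*Vi*c1'*c2'*c3'*t1 + (-1:ℂ)*Pi^3*V*c1'*c2'*s1 + (-2:ℂ)*Pi^3*V*c1'*c2'*c3'*s2 + (1:ℂ)*Pi^3*V^2*Vi*c1'*c2'*s1 + (2:ℂ)*Pi^3*V^2*Vi*c1'*c2'*c3'*s2 + (1/2:ℂ)*Pi^4*V*c1'*c2'*t0 + (1/2:ℂ)*Pi^4*V*c1'*c2'*c3'*t1 + (-1/2:ℂ)*Pi^4*V^2*Vi*c1'*c2'*t0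 + (-1/2:ℂ)*Pi^4*V^2*Vi*c1'*c2'*c3'*t1 + (-1:ℂ)*P*Vi*c1'*c2'*s1 + (-2:ℂ)*P*Vi*c1'*c2'*c3'*s2 + (1:ℂ)*P*V*c1'*c2'*s1 + (2:ℂ)*P*V*c1'*c2'*c3'*s2 + (1:ℂ)*P*V*Vi^2*c1'*c2'*s1 + (2:ℂ)*P*V*Vi^2*c1'*c2'*c3'*s2 + (-1:ℂ)*P*V^2*Vi*c1'*c2'*s1 + (-2:ℂ)*P*V^2*Vi*c1'*c2'*c3'*s2 + (1/2:ℂ)*P*Pi*Vi*c1'*c2'*t0 + (1/2:ℂ)*P*Pi*Vi*c1'*c2'*c3'*t1 + (-1/2:ℂ)*P*Pi*V*c1'*c2'*t0 + (-1/2:ℂ)*P*Pi*V*c1'*c2'*c3'*t1 + (-1/2:ℂ)*P*Pi*V*Vi^2*c1'*c2'*t0 + (-1/2:ℂ)*P*Pi*V*Vi^2*c1'*c2'*c3'*t1 + (1/2:ℂ)*P*Pi*V^2*Vi*c1'*c2'*t0 + (1/2:ℂ)*P*Pi*V^2*Vi*c1'*c2'*c3'*t1 + (1:ℂ)*P^2*Vi*c1'*c2'*t0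 + (1:ℂ)*P^2*Vi*c1'*c2'*c3'*t1 + (1:ℂ)*P^2*V*c1'*c2'*t0 + (1:ℂ)*P^2*V*c1'*c2'*c3'*t1 + (-1:ℂ)*P^2*V*Vi^2*c1'*c2'*t0 + (-1:ℂ)*P^2*V*Vi^2*c1'*c2'*c3'*t1 + (-1:ℂ)*P^2*V^2*Vi*c1'*c2'*t0 + (-1:ℂ)*P^2*V^2*Vi*c1'*c2'*c3'*t1 + (1:ℂ)*P^3*Vi*c1'*c2'*s1 + (2:ℂ)*P^3*Vi*c1'*c2'*c3'*s2 + (-1:ℂ)*P^3*V*Vi^2*c1'*c2'*s1 + (-2:ℂ)*P^3*V*Vi^2*c1'*c2'*c3'*s2 + (-1/2:ℂ)*P^4*Vi*c1'*c2'*t0 + (-1/2:ℂ)*P^4*Vi*c1'*c2'*c3'*t1 + (1/2:ℂ)*P^4*V*Vi^2*c1'*c2'*t0 + (1/2:ℂ)*P^4*V*Vi^2*c1'*c2'*c3'*t1 + (-3/2:ℂ)*Ui*V*c1'*c2'^2*t1 + (3/2:ℂ)*Ui*V^3*Vi^2*c1'*c2'^2*t1 + (-4:ℂ)*Ui*Pi*Vi*c1'*c2'^2*s2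 + (-1:ℂ)*Ui*Pi*V*Vi^4*c1'*c2'^2*s2 + (4:ℂ)*Ui*Pi*V^2*Vi^3*c1'*c2'^2*s2 + (1:ℂ)*Ui*Pi*V^3*Vi^2*c1'*c2'^2*s2 + (1/2:ℂ)*Ui*Pi^2*V*c1'*c2'^2*t1 + (-1/2:ℂ)*Ui*Pi^2*V*Vi^4*c1'*c2'^2*t1 + (-1:ℂ)*Ui*Pi^2*V^3*Vi^2*c1'*c2'^2*t1 + (1:ℂ)*Ui*Pi^3*V*c1'*c2'^2*s2 + (1:ℂ)*Ui*Pi^3*V*Vi^4*c1'*c2'^2*s2 + (-2:ℂ)*Ui*Pi^3*V^2*Vi^3*c1'*c2'^2*s2 + (-1:ℂ)*Ui*Pi^4*V*c1'*c2'^2*t1 + (1/2:ℂ)*Ui*Pi^4*V*Vi^4*c1'*c2'^2*t1 + (1:ℂ)*Ui*Pi^4*V^3*Vi^2*c1'*c2'^2*t1 + (-1:ℂ)*Ui*Pi^5*V*c1'*c2'^2*s2 + (1:ℂ)*Ui*Pi^5*V^3*Vi^2*c1'*c2'^2*s2 + (1/2:ℂ)*Ui*Pi^6*V*c1'*c2'^2*t1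 + (-1:ℂ)*Ui*Pi^6*V^3*Vi^2*c1'*c2'^2*t1 + (4:ℂ)*Ui*P*Vi*c1'*c2'^2*s2 + (1:ℂ)*Ui*P*V*c1'*c2'^2*s2 + (1:ℂ)*Ui*P*V*Vi^4*c1'*c2'^2*s2 + (-4:ℂ)*Ui*P*V^2*Vi^3*c1'*c2'^2*s2 + (-2:ℂ)*Ui*P*V^3*Vi^2*c1'*c2'^2*s2 + (-1/2:ℂ)*Ui*P*Pi*V*c1'*c2'^2*t1 + (1:ℂ)*Ui*P*Pi*V*Vi^4*c1'*c2'^2*t1 + (3/2:ℂ)*Ui*P*Pi*V^3*Vi^2*c1'*c2'^2*t1 + (-2:ℂ)*Ui*P*Pi^2*Vi*c1'*c2'^2*s2 + (-2:ℂ)*Ui*P*Pi^2*V*Vi^4*c1'*c2'^2*s2 + (4:ℂ)*Ui*P*Pi^2*V^2*Vi^3*c1'*c2'^2*s2 + (1/2:ℂ)*Ui*P*Pi^3*Vi*c1'*c2'^2*t1 + (-3/2:ℂ)*Ui*P*Pi^3*V*Vi^4*c1'*c2'^2*t1 + (-1/2:ℂ)*Ui*P*Pi^3*V^2*Vi^3*c1'*c2'^2*t1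 + (1:ℂ)*Ui*P*Pi^4*V*Vi^4*c1'*c2'^2*s2 + (-2:ℂ)*Ui*P*Pi^4*V^2*Vi^3*c1'*c2'^2*s2 + (1:ℂ)*Ui*P*Pi^4*V^3*Vi^2*c1'*c2'^2*s2 + (1/2:ℂ)*Ui*P*Pi^5*V*Vi^4*c1'*c2'^2*t1 + (1/2:ℂ)*Ui*P*Pi^5*V^2*Vi^3*c1'*c2'^2*t1 + (1:ℂ)*Ui*P^2*V*c1'*c2'^2*t1 + (-1/2:ℂ)*Ui*P^2*V*Vi^4*c1'*c2'^2*t1 + (-3/2:ℂ)*Ui*P^2*V^3*Vi^2*c1'*c2'^2*t1 + (4:ℂ)*Ui*P^2*Pi*Vi*c1'*c2'^2*s2 + (-2:ℂ)*Ui*P^2*Pi*V^2*Vi^3*c1'*c2'^2*s2 + (-2:ℂ)*Ui*P^2*Pi*V^3*Vi^2*c1'*c2'^2*s2 + (1:ℂ)*Ui*P^2*Pi^2*V*Vi^4*c1'*c2'^2*t1 + (1:ℂ)*Ui*P^2*Pi^2*V^3*Vi^2*c1'*c2'^2*t1 + (-1:ℂ)*Ui*P^2*Pi^3*V*Vi^4*c1'*c2'^2*s2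 + (2:ℂ)*Ui*P^2*Pi^3*V^2*Vi^3*c1'*c2'^2*s2 + (-1:ℂ)*Ui*P^2*Pi^3*V^3*Vi^2*c1'*c2'^2*s2 + (-1:ℂ)*Ui*P^2*Pi^4*V*Vi^4*c1'*c2'^2*t1 + (1:ℂ)*Ui*P^2*Pi^4*V^3*Vi^2*c1'*c2'^2*t1 + (-2:ℂ)*Ui*P^3*Vi*c1'*c2'^2*s2 + (1:ℂ)*Ui*P^3*V*Vi^4*c1'*c2'^2*s2 + (1:ℂ)*Ui*P^3*V^3*Vi^2*c1'*c2'^2*s2 + (-1/2:ℂ)*Ui*P^3*Pi*Vi*c1'*c2'^2*t1 + (1/2:ℂ)*Ui*P^3*Pi*V^2*Vi^3*c1'*c2'^2*t1 + (-3/2:ℂ)*Ui*P^3*Pi*V^3*Vi^2*c1'*c2'^2*t1 + (2:ℂ)*Ui*P^3*Pi^2*Vi*c1'*c2'^2*s2 + (-1:ℂ)*Ui*P^3*Pi^2*V*Vi^4*c1'*c2'^2*s2 + (-1:ℂ)*Ui*P^3*Pi^2*V^3*Vi^2*c1'*c2'^2*s2 + (-1/2:ℂ)*Ui*P^3*Pi^3*Vi*c1'*c2'^2*t1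 + (-1/2:ℂ)*Ui*P^3*Pi^3*V^2*Vi^3*c1'*c2'^2*t1 + (1/2:ℂ)*Ui*P^4*V^3*Vi^2*c1'*c2'^2*t1 + (-2:ℂ)*Ui*P^4*Pi*Vi*c1'*c2'^2*s2 + (1:ℂ)*Ui*P^4*Pi*V*Vi^4*c1'*c2'^2*s2 + (1:ℂ)*Ui*P^4*Pi*V^3*Vi^2*c1'*c2'^2*s2 + (1:ℂ)*Ui*P^4*Pi^2*V*Vi^4*c1'*c2'^2*t1 + (-1:ℂ)*Ui*P^4*Pi^2*V^3*Vi^2*c1'*c2'^2*t1 + (1/2:ℂ)*Ui*P^5*Pi*Vi*c1'*c2'^2*t1 + (1/2:ℂ)*Ui*P^5*Pi*V^3*Vi^2*c1'*c2'^2*t1 + (-1/2:ℂ)*Ui*P^6*V*Vi^4*c1'*c2'^2*t1 + (1:ℂ)*Ui^2*Pi*Vi*c2'^2*s1 + (2:ℂ)*Ui^2*Pi*Vi*c2'^2*c3'*s2 + (-1:ℂ)*Ui^2*Pi*Vi^3*c2'^2*s1 + (-2:ℂ)*Ui^2*Pi*Vi^3*c2'^2*c3'*s2 + (-1/2:ℂ)*Ui^2*Pi^2*Vi^3*c2'^2*t0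 + (-1/2:ℂ)*Ui^2*Pi^2*Vi^3*c2'^2*c3'*t1 + (-1:ℂ)*Ui^2*P*Vi*c2'^2*s1 + (-2:ℂ)*Ui^2*P*Vi*c2'^2*c3'*s2 + (1:ℂ)*Ui^2*P*Vi^3*c2'^2*s1 + (2:ℂ)*Ui^2*P*Vi^3*c2'^2*c3'*s2 + (1/2:ℂ)*Ui^2*P*Pi*Vi*c2'^2*t0 + (1/2:ℂ)*Ui^2*P*Pi*Vi*c2'^2*c3'*t1 + (1/2:ℂ)*Ui^2*P*Pi*Vi^3*c2'^2*t0 + (1/2:ℂ)*Ui^2*P*Pi*Vi^3*c2'^2*c3'*t1 + (1:ℂ)*Ui^2*P*Pi^2*Vi*c2'^2*s1 + (2:ℂ)*Ui^2*P*Pi^2*Vi*c2'^2*c3'*s2 + (-1:ℂ)*Ui^2*P*Pi^2*Vi^3*c2'^2*s1 + (-2:ℂ)*Ui^2*P*Pi^2*Vi^3*c2'^2*c3'*s2 + (-1/2:ℂ)*Ui^2*P*Pi^3*Vi*c2'^2*t0 + (-1/2:ℂ)*Ui^2*P*Pi^3*Vi*c2'^2*c3'*t1 + (-1/2:ℂ)*Ui^2*P^2*Vi*c2'^2*t0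 + (-1/2:ℂ)*Ui^2*P^2*Vi*c2'^2*c3'*t1 + (-1:ℂ)*Ui^2*P^2*Pi*Vi*c2'^2*s1 + (-2:ℂ)*Ui^2*P^2*Pi*Vi*c2'^2*c3'*s2 + (1:ℂ)*Ui^2*P^2*Pi*Vi^3*c2'^2*s1 + (2:ℂ)*Ui^2*P^2*Pi*Vi^3*c2'^2*c3'*s2 + (1/2:ℂ)*Ui^2*P^2*Pi^2*Vi*c2'^2*t0 + (1/2:ℂ)*Ui^2*P^2*Pi^2*Vi*c2'^2*c3'*t1 + (1/2:ℂ)*Ui^2*P^2*Pi^2*Vi^3*c2'^2*t0 + (1/2:ℂ)*Ui^2*P^2*Pi^2*Vi^3*c2'^2*c3'*t1 + (-1/2:ℂ)*Ui^2*P^3*Pi*Vi^3*c2'^2*t0 + (-1/2:ℂ)*Ui^2*P^3*Pi*Vi^3*c2'^2*c3'*t1 + (-2:ℂ)*Ui^3*Vi*c2'^3*t1 + (2:ℂ)*Ui^3*V^2*Vi^3*c2'^3*t1 + (-2:ℂ)*Ui^3*Pi*Vi*c2'^3*s2 + (-1:ℂ)*Ui^3*Pi*Vi^5*c2'^3*s2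 + (3:ℂ)*Ui^3*Pi*V^2*Vi^3*c2'^3*s2 + (5/2:ℂ)*Ui^3*Pi^2*Vi*c2'^3*t1 + (-1/2:ℂ)*Ui^3*Pi^2*Vi^5*c2'^3*t1 + (-3:ℂ)*Ui^3*Pi^2*V^2*Vi^3*c2'^3*t1 + (2:ℂ)*Ui^3*Pi^3*Vi*c2'^3*s2 + (-2:ℂ)*Ui^3*Pi^3*V^2*Vi^3*c2'^3*s2 + (-1:ℂ)*Ui^3*Pi^4*Vi*c2'^3*t1 + (3/2:ℂ)*Ui^3*Pi^4*V^2*Vi^3*c2'^3*t1 + (1:ℂ)*Ui^3*P*Vi^5*c2'^3*s2 + (-1:ℂ)*Ui^3*P*V^2*Vi^3*c2'^3*s2 + (-1:ℂ)*Ui^3*P*Pi*Vi*c2'^3*t1 + (1:ℂ)*Ui^3*P*Pi*Vi^5*c2'^3*t1 + (2:ℂ)*Ui^3*P*Pi*V^2*Vi^3*c2'^3*t1 + (-1:ℂ)*Ui^3*P*Pi^2*Vi*c2'^3*s2 + (-1:ℂ)*Ui^3*P*Pi^2*Vi^5*c2'^3*s2 + (2:ℂ)*Ui^3*P*Pi^2*V^2*Vi^3*c2'^3*s2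 + (1:ℂ)*Ui^3*P*Pi^3*Vi*c2'^3*t1 + (-1/2:ℂ)*Ui^3*P*Pi^3*Vi^5*c2'^3*t1 + (-2:ℂ)*Ui^3*P*Pi^3*V^2*Vi^3*c2'^3*t1 + (1:ℂ)*Ui^3*P*Pi^4*Vi*c2'^3*s2 + (-1:ℂ)*Ui^3*P*Pi^4*V^2*Vi^3*c2'^3*s2 + (-1/2:ℂ)*Ui^3*P*Pi^5*Vi*c2'^3*t1 + (1/2:ℂ)*Ui^3*P*Pi^5*V^2*Vi^3*c2'^3*t1 + (-1/2:ℂ)*Ui^3*P^2*Vi^5*c2'^3*t1 + (-1/2:ℂ)*Ui^3*P^2*V^2*Vi^3*c2'^3*t1 + (1:ℂ)*Ui^3*P^2*Pi*Vi^5*c2'^3*s2 + (-1:ℂ)*Ui^3*P^2*Pi*V^2*Vi^3*c2'^3*s2 + (-1/2:ℂ)*Ui^3*P^2*Pi^2*Vi*c2'^3*t1 + (1:ℂ)*Ui^3*P^2*Pi^2*Vi^5*c2'^3*t1 + (3/2:ℂ)*Ui^3*P^2*Pi^2*V^2*Vi^3*c2'^3*t1 + (-1:ℂ)*Ui^3*P^2*Pi^3*Vi*c2'^3*s2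 + (1:ℂ)*Ui^3*P^2*Pi^3*V^2*Vi^3*c2'^3*s2 + (1/2:ℂ)*Ui^3*P^2*Pi^4*Vi*c2'^3*t1 + (-1:ℂ)*Ui^3*P^2*Pi^4*V^2*Vi^3*c2'^3*t1 + (-1:ℂ)*Ui^3*P^3*Pi*Vi^5*c2'^3*t1 + (-1/2:ℂ)*Ui^3*P^3*Pi*V^2*Vi^3*c2'^3*t1 + (1/2:ℂ)*Ui^3*P^3*Pi^3*Vi^5*c2'^3*t1 + (1/2:ℂ)*Ui^3*P^3*Pi^3*V^2*Vi^3*c2'^3*t1 + (1/2:ℂ)*Ui^3*P^4*Vi^5*c2'^3*t1 + (-1/2:ℂ)*Ui^3*P^4*Pi^2*Vi^5*c2'^3*t1 + (3/2:ℂ)*U*Vi*c1'^2*c2'*t1 + (-3/2:ℂ)*U*V^2*Vi^3*c1'^2*c2'*t1 + (-1:ℂ)*U*Pi*Vi*c1'^2*c2'*s2 + (-4:ℂ)*U*Pi*V*c1'^2*c2'*s2 + (2:ℂ)*U*Pi*V^2*Vi^3*c1'^2*c2'*s2 + (4:ℂ)*U*Pi*V^3*Vi^2*c1'^2*c2'*s2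 + (-1:ℂ)*U*Pi*V^4*Vi*c1'^2*c2'*s2 + (-1:ℂ)*U*Pi^2*Vi*c1'^2*c2'*t1 + (3/2:ℂ)*U*Pi^2*V^2*Vi^3*c1'^2*c2'*t1 + (1/2:ℂ)*U*Pi^2*V^4*Vi*c1'^2*c2'*t1 + (2:ℂ)*U*Pi^3*V*c1'^2*c2'*s2 + (-1:ℂ)*U*Pi^3*V^2*Vi^3*c1'^2*c2'*s2 + (-1:ℂ)*U*Pi^3*V^4*Vi*c1'^2*c2'*s2 + (-1/2:ℂ)*U*Pi^4*V^2*Vi^3*c1'^2*c2'*t1 + (1/2:ℂ)*U*Pi^6*V^4*Vi*c1'^2*c2'*t1 + (4:ℂ)*U*P*V*c1'^2*c2'*s2 + (-1:ℂ)*U*P*V^2*Vi^3*c1'^2*c2'*s2 + (-4:ℂ)*U*P*V^3*Vi^2*c1'^2*c2'*s2 + (1:ℂ)*U*P*V^4*Vi*c1'^2*c2'*s2 + (1/2:ℂ)*U*P*Pi*Vi*c1'^2*c2'*t1 + (-3/2:ℂ)*U*P*Pi*V^2*Vi^3*c1'^2*c2'*t1 + (-1:ℂ)*U*P*Pi*V^4*Vi*c1'^2*c2'*t1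 + (-4:ℂ)*U*P*Pi^2*V*c1'^2*c2'*s2 + (2:ℂ)*U*P*Pi^2*V^2*Vi^3*c1'^2*c2'*s2 + (2:ℂ)*U*P*Pi^2*V^3*Vi^2*c1'^2*c2'*s2 + (1/2:ℂ)*U*P*Pi^3*V*c1'^2*c2'*t1 + (3/2:ℂ)*U*P*Pi^3*V^2*Vi^3*c1'^2*c2'*t1 + (-1/2:ℂ)*U*P*Pi^3*V^3*Vi^2*c1'^2*c2'*t1 + (2:ℂ)*U*P*Pi^4*V*c1'^2*c2'*s2 + (-1:ℂ)*U*P*Pi^4*V^2*Vi^3*c1'^2*c2'*s2 + (-1:ℂ)*U*P*Pi^4*V^4*Vi*c1'^2*c2'*s2 + (-1/2:ℂ)*U*P*Pi^5*V*c1'^2*c2'*t1 + (-1/2:ℂ)*U*P*Pi^5*V^2*Vi^3*c1'^2*c2'*t1 + (-1/2:ℂ)*U*P^2*Vi*c1'^2*c2'*t1 + (1:ℂ)*U*P^2*V^2*Vi^3*c1'^2*c2'*t1 + (1/2:ℂ)*U*P^2*V^4*Vi*c1'^2*c2'*t1 + (2:ℂ)*U*P^2*Pi*V*c1'^2*c2'*s2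 + (-4:ℂ)*U*P^2*Pi*V^3*Vi^2*c1'^2*c2'*s2 + (2:ℂ)*U*P^2*Pi*V^4*Vi*c1'^2*c2'*s2 + (-1:ℂ)*U*P^2*Pi^2*V^2*Vi^3*c1'^2*c2'*t1 + (-1:ℂ)*U*P^2*Pi^2*V^4*Vi*c1'^2*c2'*t1 + (-2:ℂ)*U*P^2*Pi^3*V*c1'^2*c2'*s2 + (1:ℂ)*U*P^2*Pi^3*V^2*Vi^3*c1'^2*c2'*s2 + (1:ℂ)*U*P^2*Pi^3*V^4*Vi*c1'^2*c2'*s2 + (1:ℂ)*U*P^2*Pi^4*V^2*Vi^3*c1'^2*c2'*t1 + (-1:ℂ)*U*P^2*Pi^4*V^4*Vi*c1'^2*c2'*t1 + (-1:ℂ)*U*P^3*Vi*c1'^2*c2'*s2 + (2:ℂ)*U*P^3*V^3*Vi^2*c1'^2*c2'*s2 + (-1:ℂ)*U*P^3*V^4*Vi*c1'^2*c2'*s2 + (-1/2:ℂ)*U*P^3*Pi*V*c1'^2*c2'*t1 + (1/2:ℂ)*U*P^3*Pi*V^3*Vi^2*c1'^2*c2'*t1 + (3/2:ℂ)*U*P^3*Pi*V^4*Vi*c1'^2*c2'*t1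 + (1:ℂ)*U*P^3*Pi^2*V^2*Vi^3*c1'^2*c2'*s2 + (-2:ℂ)*U*P^3*Pi^2*V^3*Vi^2*c1'^2*c2'*s2 + (1:ℂ)*U*P^3*Pi^2*V^4*Vi*c1'^2*c2'*s2 + (1/2:ℂ)*U*P^3*Pi^3*V*c1'^2*c2'*t1 + (1/2:ℂ)*U*P^3*Pi^3*V^3*Vi^2*c1'^2*c2'*t1 + (1:ℂ)*U*P^4*Vi*c1'^2*c2'*t1 + (-1:ℂ)*U*P^4*V^2*Vi^3*c1'^2*c2'*t1 + (-1/2:ℂ)*U*P^4*V^4*Vi*c1'^2*c2'*t1 + (-1:ℂ)*U*P^4*Pi*V^2*Vi^3*c1'^2*c2'*s2 + (2:ℂ)*U*P^4*Pi*V^3*Vi^2*c1'^2*c2'*s2 + (-1:ℂ)*U*P^4*Pi*V^4*Vi*c1'^2*c2'*s2 + (-1:ℂ)*U*P^4*Pi^2*V^2*Vi^3*c1'^2*c2'*t1 + (1:ℂ)*U*P^4*Pi^2*V^4*Vi*c1'^2*c2'*t1 + (1:ℂ)*U*P^5*Vi*c1'^2*c2'*s2 + (-1:ℂ)*U*P^5*V^2*Vi^3*c1'^2*c2'*s2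 + (-1/2:ℂ)*U*P^5*Pi*V^3*Vi^2*c1'^2*c2'*t1 + (-1/2:ℂ)*U*P^5*Pi*V^4*Vi*c1'^2*c2'*t1 + (-1/2:ℂ)*U*P^6*Vi*c1'^2*c2'*t1 + (1:ℂ)*U*P^6*V^2*Vi^3*c1'^2*c2'*t1 + (1:ℂ)*U^2*Pi*V*c1'^2*s1 + (2:ℂ)*U^2*Pi*V*c1'^2*c3'*s2 + (-1:ℂ)*U^2*Pi*V^3*c1'^2*s1 + (-2:ℂ)*U^2*Pi*V^3*c1'^2*c3'*s2 + (1/2:ℂ)*U^2*Pi^2*V*c1'^2*t0 + (1/2:ℂ)*U^2*Pi^2*V*c1'^2*c3'*t1 + (-1:ℂ)*U^2*P*V*c1'^2*s1 + (-2:ℂ)*U^2*P*V*c1'^2*c3'*s2 + (1:ℂ)*U^2*P*V^3*c1'^2*s1 + (2:ℂ)*U^2*P*V^3*c1'^2*c3'*s2 + (-1/2:ℂ)*U^2*P*Pi*V*c1'^2*t0 + (-1/2:ℂ)*U^2*P*Pi*V*c1'^2*c3'*t1 + (-1/2:ℂ)*U^2*P*Pi*V^3*c1'^2*t0 + (-1/2:ℂ)*U^2*P*Pi*V^3*c1'^2*c3'*t1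 + (1:ℂ)*U^2*P*Pi^2*V*c1'^2*s1 + (2:ℂ)*U^2*P*Pi^2*V*c1'^2*c3'*s2 + (-1:ℂ)*U^2*P*Pi^2*V^3*c1'^2*s1 + (-2:ℂ)*U^2*P*Pi^2*V^3*c1'^2*c3'*s2 + (1/2:ℂ)*U^2*P*Pi^3*V^3*c1'^2*t0 + (1/2:ℂ)*U^2*P*Pi^3*V^3*c1'^2*c3'*t1 + (1/2:ℂ)*U^2*P^2*V^3*c1'^2*t0 + (1/2:ℂ)*U^2*P^2*V^3*c1'^2*c3'*t1 + (-1:ℂ)*U^2*P^2*Pi*V*c1'^2*s1 + (-2:ℂ)*U^2*P^2*Pi*V*c1'^2*c3'*s2 + (1:ℂ)*U^2*P^2*Pi*V^3*c1'^2*s1 + (2:ℂ)*U^2*P^2*Pi*V^3*c1'^2*c3'*s2 + (-1/2:ℂ)*U^2*P^2*Pi^2*V*c1'^2*t0 + (-1/2:ℂ)*U^2*P^2*Pi^2*V*c1'^2*c3'*t1 + (-1/2:ℂ)*U^2*P^2*Pi^2*V^3*c1'^2*t0 + (-1/2:ℂ)*U^2*P^2*Pi^2*V^3*c1'^2*c3'*t1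 + (1/2:ℂ)*U^2*P^3*Pi*V*c1'^2*t0 + (1/2:ℂ)*U^2*P^3*Pi*V*c1'^2*c3'*t1 + (2:ℂ)*U^3*V*c1'^3*t1 + (-2:ℂ)*U^3*V^3*Vi^2*c1'^3*t1 + (1:ℂ)*U^3*Pi*V^3*Vi^2*c1'^3*s2 + (-1:ℂ)*U^3*Pi*V^5*c1'^3*s2 + (1/2:ℂ)*U^3*Pi^2*V^3*Vi^2*c1'^3*t1 + (1/2:ℂ)*U^3*Pi^2*V^5*c1'^3*t1 + (-1/2:ℂ)*U^3*Pi^4*V^5*c1'^3*t1 + (2:ℂ)*U^3*P*V*c1'^3*s2 + (-3:ℂ)*U^3*P*V^3*Vi^2*c1'^3*s2 + (1:ℂ)*U^3*P*V^5*c1'^3*s2 + (1:ℂ)*U^3*P*Pi*V*c1'^3*t1 + (-2:ℂ)*U^3*P*Pi*V^3*Vi^2*c1'^3*t1 + (-1:ℂ)*U^3*P*Pi*V^5*c1'^3*t1 + (1:ℂ)*U^3*P*Pi^2*V^3*Vi^2*c1'^3*s2 + (-1:ℂ)*U^3*P*Pi^2*V^5*c1'^3*s2 + (1/2:ℂ)*U^3*P*Pi^3*V^3*Vi^2*c1'^3*t1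 + (1:ℂ)*U^3*P*Pi^3*V^5*c1'^3*t1 + (-5/2:ℂ)*U^3*P^2*V*c1'^3*t1 + (3:ℂ)*U^3*P^2*V^3*Vi^2*c1'^3*t1 + (1/2:ℂ)*U^3*P^2*V^5*c1'^3*t1 + (1:ℂ)*U^3*P^2*Pi*V*c1'^3*s2 + (-2:ℂ)*U^3*P^2*Pi*V^3*Vi^2*c1'^3*s2 + (1:ℂ)*U^3*P^2*Pi*V^5*c1'^3*s2 + (1/2:ℂ)*U^3*P^2*Pi^2*V*c1'^3*t1 + (-3/2:ℂ)*U^3*P^2*Pi^2*V^3*Vi^2*c1'^3*t1 + (-1:ℂ)*U^3*P^2*Pi^2*V^5*c1'^3*t1 + (1/2:ℂ)*U^3*P^2*Pi^4*V^5*c1'^3*t1 + (-2:ℂ)*U^3*P^3*V*c1'^3*s2 + (2:ℂ)*U^3*P^3*V^3*Vi^2*c1'^3*s2 + (-1:ℂ)*U^3*P^3*Pi*V*c1'^3*t1 + (2:ℂ)*U^3*P^3*Pi*V^3*Vi^2*c1'^3*t1 + (1/2:ℂ)*U^3*P^3*Pi*V^5*c1'^3*t1 + (1:ℂ)*U^3*P^3*Pi^2*V*c1'^3*s2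 + (-1:ℂ)*U^3*P^3*Pi^2*V^3*Vi^2*c1'^3*s2 + (-1/2:ℂ)*U^3*P^3*Pi^3*V^3*Vi^2*c1'^3*t1 + (-1/2:ℂ)*U^3*P^3*Pi^3*V^5*c1'^3*t1 + (1:ℂ)*U^3*P^4*V*c1'^3*t1 + (-3/2:ℂ)*U^3*P^4*V^3*Vi^2*c1'^3*t1 + (-1:ℂ)*U^3*P^4*Pi*V*c1'^3*s2 + (1:ℂ)*U^3*P^4*Pi*V^3*Vi^2*c1'^3*s2 + (-1/2:ℂ)*U^3*P^4*Pi^2*V*c1'^3*t1 + (1:ℂ)*U^3*P^4*Pi^2*V^3*Vi^2*c1'^3*t1 + (1/2:ℂ)*U^3*P^5*Pi*V*c1'^3*t1 + (-1/2:ℂ)*U^3*P^5*Pi*V^3*Vi^2*c1'^3*t1) * hPPi +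
          ((-1:ℂ)*Vi*c1'*c2'*t0 + (-1:ℂ)*Vi*c1'*c2'*c3'*t1 + (1:ℂ)*V*c1'*c2'*t0 + (1:ℂ)*V*c1'*c2'*c3'*t1 + (2:ℂ)*Pi*Vi*c1'*c2'*s1 + (4:ℂ)*Pi*Vi*c1'*c2'*c3'*s2 + (3/2:ℂ)*Pi^2*Vi*c1'*c2'*t0 + (3/2:ℂ)*Pi^2*Vi*c1'*c2'*c3'*t1 + (1:ℂ)*Pi^2*V*c1'*c2'*t0 + (1:ℂ)*Pi^2*V*c1'*c2'*c3'*t1 + (-1:ℂ)*Pi^3*Vi*c1'*c2'*s1 + (-2:ℂ)*Pi^3*Vi*c1'*c2'*c3'*s2 + (2:ℂ)*Pi^3*V*c1'*c2'*s1 + (4:ℂ)*Pi^3*V*c1'*c2'*c3'*s2 + (-1/2:ℂ)*Pi^4*Vi*c1'*c2'*t0 + (-1/2:ℂ)*Pi^4*Vi*c1'*c2'*c3'*t1 + (-3/2:ℂ)*Pi^4*V*c1'*c2'*t0 + (-3/2:ℂ)*Pi^4*V*c1'*c2'*c3'*t1 + (-1:ℂ)*Pi^5*V*c1'*c2'*s1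 + (-2:ℂ)*Pi^5*V*c1'*c2'*c3'*s2 + (1/2:ℂ)*Pi^6*V*c1'*c2'*t0 + (1/2:ℂ)*Pi^6*V*c1'*c2'*c3'*t1 + (-2:ℂ)*P*V*c1'*c2'*s1 + (-4:ℂ)*P*V*c1'*c2'*c3'*s2 + (-1:ℂ)*P^2*Vi*c1'*c2'*t0 + (-1:ℂ)*P^2*Vi*c1'*c2'*c3'*t1 + (-3/2:ℂ)*P^2*V*c1'*c2'*t0 + (-3/2:ℂ)*P^2*V*c1'*c2'*c3'*t1 + (-2:ℂ)*P^3*Vi*c1'*c2'*s1 + (-4:ℂ)*P^3*Vi*c1'*c2'*c3'*s2 + (1:ℂ)*P^3*V*c1'*c2'*s1 + (2:ℂ)*P^3*V*c1'*c2'*c3'*s2 + (3/2:ℂ)*P^4*Vi*c1'*c2'*t0 + (3/2:ℂ)*P^4*Vi*c1'*c2'*c3'*t1 + (1/2:ℂ)*P^4*V*c1'*c2'*t0 + (1/2:ℂ)*P^4*V*c1'*c2'*c3'*t1 + (1:ℂ)*P^5*Vi*c1'*c2'*s1 + (2:ℂ)*P^5*Vi*c1'*c2'*c3'*s2 + (-1/2:ℂ)*P^6*Vi*c1'*c2'*t0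 + (-1/2:ℂ)*P^6*Vi*c1'*c2'*c3'*t1 + (3/2:ℂ)*Ui*V*c1'*c2'^2*t1 + (3/2:ℂ)*Ui*V^2*Vi*c1'*c2'^2*t1 + (6:ℂ)*Ui*Pi*Vi*c1'*c2'^2*s2 + (1:ℂ)*Ui*Pi*V*c1'*c2'^2*s2 + (6:ℂ)*Ui*Pi*V*Vi^2*c1'*c2'^2*s2 + (1:ℂ)*Ui*Pi*V^2*Vi*c1'*c2'^2*s2 + (-1:ℂ)*Ui*Pi^2*V*c1'*c2'^2*t1 + (-1:ℂ)*Ui*Pi^2*V^2*Vi*c1'*c2'^2*t1 + (-2:ℂ)*Ui*Pi^3*Vi*c1'*c2'^2*s2 + (-1:ℂ)*Ui*Pi^3*V*c1'*c2'^2*s2 + (-2:ℂ)*Ui*Pi^3*V*Vi^2*c1'*c2'^2*s2 + (-1:ℂ)*Ui*Pi^3*V^2*Vi*c1'*c2'^2*s2 + (3/2:ℂ)*Ui*Pi^4*V*c1'*c2'^2*t1 + (3/2:ℂ)*Ui*Pi^4*V^2*Vi*c1'*c2'^2*t1 + (2:ℂ)*Ui*Pi^5*V*c1'*c2'^2*s2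 + (2:ℂ)*Ui*Pi^5*V^2*Vi*c1'*c2'^2*s2 + (-3/2:ℂ)*Ui*Pi^6*V*c1'*c2'^2*t1 + (-3/2:ℂ)*Ui*Pi^6*V^2*Vi*c1'*c2'^2*t1 + (-1:ℂ)*Ui*Pi^7*V*c1'*c2'^2*s2 + (-1:ℂ)*Ui*Pi^7*V^2*Vi*c1'*c2'^2*s2 + (1/2:ℂ)*Ui*Pi^8*V*c1'*c2'^2*t1 + (1/2:ℂ)*Ui*Pi^8*V^2*Vi*c1'*c2'^2*t1 + (-6:ℂ)*Ui*P*Vi*c1'*c2'^2*s2 + (-2:ℂ)*Ui*P*V*c1'*c2'^2*s2 + (-6:ℂ)*Ui*P*V*Vi^2*c1'*c2'^2*s2 + (-2:ℂ)*Ui*P*V^2*Vi*c1'*c2'^2*s2 + (-3/2:ℂ)*Ui*P^2*V*c1'*c2'^2*t1 + (-3/2:ℂ)*Ui*P^2*V^2*Vi*c1'*c2'^2*t1 + (2:ℂ)*Ui*P^3*Vi*c1'*c2'^2*s2 + (1:ℂ)*Ui*P^3*V*c1'*c2'^2*s2 + (2:ℂ)*Ui*P^3*V*Vi^2*c1'*c2'^2*s2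 + (1:ℂ)*Ui*P^3*V^2*Vi*c1'*c2'^2*s2 + (1/2:ℂ)*Ui*P^4*V*c1'*c2'^2*t1 + (1/2:ℂ)*Ui*P^4*V^2*Vi*c1'*c2'^2*t1 + (2:ℂ)*Ui^3*Vi*c2'^3*t1 + (2:ℂ)*Ui^3*V*Vi^2*c2'^3*t1 + (3:ℂ)*Ui^3*Pi*Vi*c2'^3*s2 + (3:ℂ)*Ui^3*Pi*V*Vi^2*c2'^3*s2 + (-3:ℂ)*Ui^3*Pi^2*Vi*c2'^3*t1 + (-3:ℂ)*Ui^3*Pi^2*V*Vi^2*c2'^3*t1 + (-3:ℂ)*Ui^3*Pi^3*Vi*c2'^3*s2 + (-3:ℂ)*Ui^3*Pi^3*V*Vi^2*c2'^3*s2 + (2:ℂ)*Ui^3*Pi^4*Vi*c2'^3*t1 + (2:ℂ)*Ui^3*Pi^4*V*Vi^2*c2'^3*t1 + (1:ℂ)*Ui^3*Pi^5*Vi*c2'^3*s2 + (1:ℂ)*Ui^3*Pi^5*V*Vi^2*c2'^3*s2 + (-1/2:ℂ)*Ui^3*Pi^6*Vi*c2'^3*t1 + (-1/2:ℂ)*Ui^3*Pi^6*V*Vi^2*c2'^3*t1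 + (-1:ℂ)*Ui^3*P*Vi*c2'^3*s2 + (-1:ℂ)*Ui^3*P*V*Vi^2*c2'^3*s2 + (-1/2:ℂ)*Ui^3*P^2*Vi*c2'^3*t1 + (-1/2:ℂ)*Ui^3*P^2*V*Vi^2*c2'^3*t1 + (-3/2:ℂ)*U*Vi*c1'^2*c2'*t1 + (-3/2:ℂ)*U*V*Vi^2*c1'^2*c2'*t1 + (2:ℂ)*U*Pi*Vi*c1'^2*c2'*s2 + (6:ℂ)*U*Pi*V*c1'^2*c2'*s2 + (2:ℂ)*U*Pi*V*Vi^2*c1'^2*c2'*s2 + (6:ℂ)*U*Pi*V^2*Vi*c1'^2*c2'*s2 + (3/2:ℂ)*U*Pi^2*Vi*c1'^2*c2'*t1 + (3/2:ℂ)*U*Pi^2*V*Vi^2*c1'^2*c2'*t1 + (-1:ℂ)*U*Pi^3*Vi*c1'^2*c2'*s2 + (-2:ℂ)*U*Pi^3*V*c1'^2*c2'*s2 + (-1:ℂ)*U*Pi^3*V*Vi^2*c1'^2*c2'*s2 + (-2:ℂ)*U*Pi^3*V^2*Vi*c1'^2*c2'*s2 + (-1/2:ℂ)*U*Pi^4*Vi*c1'^2*c2'*t1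 + (-1/2:ℂ)*U*Pi^4*V*Vi^2*c1'^2*c2'*t1 + (-1:ℂ)*U*P*Vi*c1'^2*c2'*s2 + (-6:ℂ)*U*P*V*c1'^2*c2'*s2 + (-1:ℂ)*U*P*V*Vi^2*c1'^2*c2'*s2 + (-6:ℂ)*U*P*V^2*Vi*c1'^2*c2'*s2 + (1:ℂ)*U*P^2*Vi*c1'^2*c2'*t1 + (1:ℂ)*U*P^2*V*Vi^2*c1'^2*c2'*t1 + (1:ℂ)*U*P^3*Vi*c1'^2*c2'*s2 + (2:ℂ)*U*P^3*V*c1'^2*c2'*s2 + (1:ℂ)*U*P^3*V*Vi^2*c1'^2*c2'*s2 + (2:ℂ)*U*P^3*V^2*Vi*c1'^2*c2'*s2 + (-3/2:ℂ)*U*P^4*Vi*c1'^2*c2'*t1 + (-3/2:ℂ)*U*P^4*V*Vi^2*c1'^2*c2'*t1 + (-2:ℂ)*U*P^5*Vi*c1'^2*c2'*s2 + (-2:ℂ)*U*P^5*V*Vi^2*c1'^2*c2'*s2 + (3/2:ℂ)*U*P^6*Vi*c1'^2*c2'*t1 + (3/2:ℂ)*U*P^6*V*Vi^2*c1'^2*c2'*t1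 + (1:ℂ)*U*P^7*Vi*c1'^2*c2'*s2 + (1:ℂ)*U*P^7*V*Vi^2*c1'^2*c2'*s2 + (-1/2:ℂ)*U*P^8*Vi*c1'^2*c2'*t1 + (-1/2:ℂ)*U*P^8*V*Vi^2*c1'^2*c2'*t1 + (-2:ℂ)*U^3*V*c1'^3*t1 + (-2:ℂ)*U^3*V^2*Vi*c1'^3*t1 + (1:ℂ)*U^3*Pi*V*c1'^3*s2 + (1:ℂ)*U^3*Pi*V^2*Vi*c1'^3*s2 + (1/2:ℂ)*U^3*Pi^2*V*c1'^3*t1 + (1/2:ℂ)*U^3*Pi^2*V^2*Vi*c1'^3*t1 + (-3:ℂ)*U^3*P*V*c1'^3*s2 + (-3:ℂ)*U^3*P*V^2*Vi*c1'^3*s2 + (3:ℂ)*U^3*P^2*V*c1'^3*t1 + (3:ℂ)*U^3*P^2*V^2*Vi*c1'^3*t1 + (3:ℂ)*U^3*P^3*V*c1'^3*s2 + (3:ℂ)*U^3*P^3*V^2*Vi*c1'^3*s2 + (-2:ℂ)*U^3*P^4*V*c1'^3*t1 + (-2:ℂ)*U^3*P^4*V^2*Vi*c1'^3*t1 + (-1:ℂ)*U^3*P^5*V*c1'^3*s2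 + (-1:ℂ)*U^3*P^5*V^2*Vi*c1'^3*s2 + (1/2:ℂ)*U^3*P^6*V*c1'^3*t1 + (1/2:ℂ)*U^3*P^6*V^2*Vi*c1'^3*t1) * hVVi
      · simp only [sig, xl, kap, hstv, httv, hx, ha, hg]
        push_cast
        ring
    have gen : ∀ A B K D4 D3 D2 : ℂ, D4 ≠ 0 → D3 ≠ 0 → D2 ≠ 0 →
        A * D3 - B * D4 = -K * (D2 * (D4 * D3)) →
        lam = (lam - K) - (A / D4 - B / D3) / D2 := by
      intro A B K D4 D3 D2 h4' h3' h2' hk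
      field_simp
      linear_combination hk
    exact gen _ _ _ _ _ _ h4 h3 h2 key
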